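/- arXiv:1001.0358 — 3 statements merged into one kernel-verified Lean document; each statement's English description precedes it below -/
import Mathlib

section
/- If Y ⊆ ℝⁿ is locally compact and locally contractible, then Y is a Euclidean neighborhood retract: there exists a set U ⊆ ℝⁿ that is a neighborhood of Y in ℝⁿ and a continuous retraction r : U → Y, i.e. a continuous map with r(y) = y for all y ∈ Y. -/
open CategoryTheory

/-- The singular chain complex of a topological space, with `ℤ` coefficients:
the alternating face map complex of the free simplicial abelian group on the
singular simplicial set. -/
noncomputable def singularChainComplex : TopCat.{0} ⥤ ChainComplex AddCommGrpCat.{0} ℕ :=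
  TopCat.toSSet ⋙ ((SimplicialObject.whiskering _ _).obj AddCommGrpCat.free) ⋙
    (AlgebraicTopology.alternatingFaceMapComplex _)

/-- Singular homology with integer coefficients, indexed by `q : ℤ`
(it vanishes in negative degrees): the `ℕ`-indexed singular chain complex is
extended to a `ℤ`-indexed (cohomologically graded) complex, where the chain
degree `q` sits in cohomological degree `-q`. -/
noncomputable def singularHomology (q : ℤ) : TopCat.{0} ⥤ AddCommGrpCat.{0} :=
  singularChainComplex ⋙
    (ComplexShape.embeddingDownNat.extendFunctor AddCommGrpCat) ⋙
    HomologicalComplex.homologyFunctor _ _ (-q)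

/-- `V` is contractible within `U`: the inclusion `V ↪ U` is homotopic, as a map
of subspaces, to a constant map. -/
def ContractibleIn {Y : Type*} [TopologicalSpace Y] (V U : Set Y) : Prop :=
  ∃ (h : V ⊆ U) (p : U),
    ContinuousMap.Homotopic ⟨Set.inclusion h, continuous_inclusion h⟩
      (ContinuousMap.const V p)

/-- A space is locally contractible if every neighborhood of a point contains a
neighborhood that is contractible within it. -/
def LocallyContractible (Y : Type*) [TopologicalSpace Y] : Prop :=
  ∀ x : Y, ∀ U ∈ nhds x, ∃ V ∈ nhds x, V ⊆ U ∧ ContractibleIn V U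

namespace ENR

open Metric Set
open scoped Classical

/-! ### Simplices in `ι → ℝ` -/

noncomputable def Lam {ι : Type*} (σ : Finset ι) : Set (ι → ℝ) :=
  {b | (∀ i, 0 ≤ b i) ∧ (∀ i ∉ σ, b i = 0) ∧ ∑ i ∈ σ, b i = 1}

def bdry {ι : Type*} (σ : Finset ι) : Set (ι → ℝ) :=
  {b | b ∈ Lam σ ∧ ∃ i ∈ σ, b i = 0}

theorem Lam_mono {ι : Type*} {τ σ : Finset ι} (h : τ ⊆ σ) : Lam τ ⊆ Lam σ := by
  rintro b ⟨h1, h2, h3⟩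
  refine ⟨h1, fun i hi => h2 i (fun hit => hi (h hit)), ?_⟩
  rw [← h3]
  exact (Finset.sum_subset h (fun i hi hit => h2 i hit)).symm

theorem Lam_subset_bdry {ι : Type*} {τ σ : Finset ι} (h : τ ⊂ σ) : Lam τ ⊆ bdry σ := by
  intro b hb
  obtain ⟨i, hiσ, hiτ⟩ := Finset.exists_of_ssubset h
  exact ⟨Lam_mono h.subset hb, i, hiσ, hb.2.1 i hiτ⟩

theorem bdry_subset_Lam {ι : Type*} (σ : Finset ι) : bdry σ ⊆ Lam σ := fun _ hb => hb.1

theorem isClosed_Lam {ι : Type*} (σ : Finset ι) : IsClosed (Lam σ) := by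
  have h1 : IsClosed {b : ι → ℝ | ∀ i, 0 ≤ b i} := by
    rw [Set.setOf_forall]
    exact isClosed_iInter (fun i => isClosed_le continuous_const (continuous_apply i))
  have h2 : IsClosed {b : ι → ℝ | ∀ i ∉ σ, b i = 0} := by
    rw [Set.setOf_forall]
    refine isClosed_iInter (fun i => ?_)
    by_cases h : i ∈ σ
    · simp [h]
    · have : {b : ι → ℝ | i ∉ σ → b i = 0} = {b : ι → ℝ | b i = 0} := by
        ext b; simp [h]
      rw [this]
      exact isClosed_eq (continuous_apply i) continuous_const
  have h3 : IsClosed {b : ι → ℝ | ∑ i ∈ σ, b i = 1} :=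
    isClosed_eq (by continuity) continuous_const
  have : Lam σ = {b : ι → ℝ | ∀ i, 0 ≤ b i} ∩ ({b | ∀ i ∉ σ, b i = 0} ∩ {b | ∑ i ∈ σ, b i = 1}) := by
    ext b; simp only [Lam, Set.mem_setOf_eq, Set.mem_inter_iff]
  rw [this]
  exact h1.inter (h2.inter h3)

theorem isClosed_bdry {ι : Type*} (σ : Finset ι) : IsClosed (bdry σ) := by
  have : bdry σ = Lam σ ∩ ⋃ i ∈ σ, {b : ι → ℝ | b i = 0} := by
    ext b
    simp only [bdry, Set.mem_setOf_eq, Set.mem_inter_iff, Set.mem_iUnion]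
    tauto
  rw [this]
  refine (isClosed_Lam σ).inter (Set.Finite.isClosed_biUnion (σ.finite_toSet) ?_)
  exact fun i _ => isClosed_eq (continuous_apply i) continuous_const

theorem isCompact_Lam {ι : Type*} (σ : Finset ι) : IsCompact (Lam σ) := by
  refine IsCompact.of_isClosed_subset (isCompact_univ_pi (fun i => isCompact_Icc (a := (0:ℝ)) (b := 1)))
    (isClosed_Lam σ) ?_
  rintro b ⟨h1, h2, h3⟩ i _
  refine ⟨h1 i, ?_⟩
  by_cases h : i ∈ σ
  · rw [← h3]; exact Finset.single_le_sum (fun j _ => h1 j) h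
  · rw [h2 i h]; norm_num

theorem isCompact_bdry {ι : Type*} (σ : Finset ι) : IsCompact (bdry σ) :=
  IsCompact.of_isClosed_subset (isCompact_Lam σ) (isClosed_bdry σ) (bdry_subset_Lam σ)

theorem Lam_nonempty {ι : Type*} [DecidableEq ι] {σ : Finset ι} (h : σ.Nonempty) :
    (Lam σ).Nonempty := by
  obtain ⟨i₀, hi₀⟩ := h
  refine ⟨fun i => if i = i₀ then 1 else 0, fun i => by positivity, fun i hi => ?_, ?_⟩
  · simp only [ite_eq_right_iff]
    intro he; exact absurd (he ▸ hi₀) hi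
  · rw [Finset.sum_ite_eq' σ i₀ (fun _ => (1:ℝ))]
    simp [hi₀]

/-- support of `b ∈ Lam σ`, as a subset of `σ`. -/
noncomputable def suppIn {ι : Type*} (σ : Finset ι) (b : ι → ℝ) : Finset ι := σ.filter (fun i => b i ≠ 0)

theorem mem_Lam_suppIn {ι : Type*} {σ : Finset ι} {b : ι → ℝ} (hb : b ∈ Lam σ) :
    b ∈ Lam (suppIn σ b) := by
  refine ⟨hb.1, fun i hi => ?_, ?_⟩
  · by_cases h : i ∈ σ
    · by_contra hne
      exact hi (Finset.mem_filter.mpr ⟨h, hne⟩)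
    · exact hb.2.1 i h
  · rw [suppIn, Finset.sum_filter_ne_zero]
    exact hb.2.2

theorem suppIn_subset {ι : Type*} {σ : Finset ι} (b : ι → ℝ) : suppIn σ b ⊆ σ :=
  Finset.filter_subset _ _

theorem suppIn_nonempty {ι : Type*} {σ : Finset ι} {b : ι → ℝ} (hb : b ∈ Lam σ) :
    (suppIn σ b).Nonempty := by
  rw [Finset.nonempty_iff_ne_empty]
  intro h
  have : ∑ i ∈ σ, b i = 0 := by
    refine Finset.sum_eq_zero (fun i hi => ?_)
    by_contra hne
    have : i ∈ suppIn σ b := Finset.mem_filter.mpr ⟨hi, hne⟩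
    simp [h] at this
  rw [hb.2.2] at this
  norm_num at this

theorem suppIn_subset_of_mem_Lam {ι : Type*} {σ τ : Finset ι} {b : ι → ℝ}
    (hb : b ∈ Lam τ) : suppIn σ b ⊆ τ := by
  intro i hi
  have := (Finset.mem_filter.mp hi).2
  by_contra h
  exact this (hb.2.1 i h)

theorem mem_bdry_iff_suppIn_ssubset {ι : Type*} {σ : Finset ι} {b : ι → ℝ} (hb : b ∈ Lam σ) :
    b ∈ bdry σ ↔ suppIn σ b ⊂ σ := by
  rw [Finset.ssubset_iff_of_subset (suppIn_subset b)]
  constructor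
  · rintro ⟨-, i, hiσ, hib⟩
    exact ⟨i, hiσ, fun hmem => (Finset.mem_filter.mp hmem).2 hib⟩
  · rintro ⟨i, hiσ, hi⟩
    refine ⟨hb, i, hiσ, ?_⟩
    by_contra hne
    exact hi (Finset.mem_filter.mpr ⟨hiσ, hne⟩)

/-! ### Cone extension -/

theorem continuous_inf' {ι : Type*} {σ : Finset ι} (hne : σ.Nonempty) :
    Continuous (fun b : ι → ℝ => σ.inf' hne b) := by
  induction hne using Finset.Nonempty.cons_induction with
  | singleton i => simpa using continuous_apply i
  | cons a s ha hs ih =>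
      have : (fun b : ι → ℝ => (Finset.cons a s ha).inf' (Finset.cons_nonempty ha) b)
          = fun b => min (b a) (s.inf' hs b) := by
        funext b
        rw [Finset.inf'_cons hs]
      rw [this]
      exact (continuous_apply a).min ih

section coneExtSec

variable {ι Z : Type*} [DecidableEq ι] [MetricSpace Z] {V U : Set Z}

theorem coneExt (hc : ContractibleIn V U) (σ : Finset ι) (h2 : 2 ≤ σ.card)
    (f : C(bdry σ, Z)) (hf : ∀ b, f b ∈ V) :
    ∃ F : C(Lam σ, Z), (∀ (b : Lam σ) (hb : (b : ι → ℝ) ∈ bdry σ), F b = f ⟨b, hb⟩) ∧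
      ∀ b, F b ∈ U := by
  obtain ⟨hVU, p, hH⟩ := hc
  obtain ⟨H⟩ := hH
  have hne : σ.Nonempty := Finset.card_pos.mp (by omega)
  set m : ℝ := (σ.card : ℝ) with hm
  have hm2 : (2:ℝ) ≤ m := by rw [hm]; exact_mod_cast h2
  -- gauge
  set mn : (ι → ℝ) → ℝ := fun b => σ.inf' hne b with hmn
  set μ : (ι → ℝ) → ℝ := fun b => m * mn b with hμ
  have hmncont : Continuous mn := continuous_inf' hne
  have hμcont : Continuous μ := continuous_const.mul hmncont
  have hmn_nonneg : ∀ b : Lam σ, 0 ≤ mn (b : ι → ℝ) := by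
    intro b
    obtain ⟨i, hi, heq⟩ := Finset.exists_mem_eq_inf' hne (b : ι → ℝ)
    show 0 ≤ σ.inf' hne (b : ι → ℝ)
    rw [heq]; exact b.2.1 i
  have hmn_le : ∀ (b : Lam σ), ∀ i ∈ σ, mn (b : ι → ℝ) ≤ (b : ι → ℝ) i :=
    fun b i hi => Finset.inf'_le _ hi
  have hμ01 : ∀ b : Lam σ, 0 ≤ μ (b : ι → ℝ) ∧ μ (b : ι → ℝ) ≤ 1 := by
    intro b
    constructor
    · exact mul_nonneg (by positivity) (hmn_nonneg b)
    · have := Finset.card_nsmul_le_sum σ (b : ι → ℝ) (mn (b : ι → ℝ))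
        (fun i hi => hmn_le b i hi)
      rw [nsmul_eq_mul] at this
      rw [hμ]
      calc m * mn (b:ι → ℝ) ≤ ∑ i ∈ σ, (b : ι → ℝ) i := this
        _ = 1 := b.2.2.2
  -- gauge on boundary is 0
  have hμbd : ∀ (b : ι → ℝ), b ∈ bdry σ → μ b = 0 := by
    rintro b ⟨hbL, i, hi, hbi⟩
    have h1 : mn b ≤ 0 := hbi ▸ Finset.inf'_le _ hi
    have h2' : 0 ≤ mn b := hmn_nonneg ⟨b, hbL⟩
    rw [hμ]
    simp only
    rw [le_antisymm h1 h2']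
    ring
  -- the radial projection
  set π : (ι → ℝ) → (ι → ℝ) :=
    fun b => fun i => if i ∈ σ then ((b i - mn b) / (1 - μ b)) else 0 with hπ
  have hπ_mem : ∀ (b : Lam σ), μ (b : ι → ℝ) < 1 → π (b : ι → ℝ) ∈ bdry σ := by
    intro b hb1
    have hpos : 0 < 1 - μ (b : ι → ℝ) := by linarith
    refine ⟨⟨fun i => ?_, fun i hi => if_neg hi, ?_⟩, ?_⟩
    · rw [hπ]; simp only
      split_ifs with h
      · exact div_nonneg (by linarith [hmn_le b i h]) hpos.le
      · exact le_refl 0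
    · have : ∑ i ∈ σ, π (b : ι → ℝ) i = ∑ i ∈ σ, ((b : ι → ℝ) i - mn (b:ι → ℝ)) / (1 - μ (b:ι→ℝ)) := by
        refine Finset.sum_congr rfl (fun i hi => ?_)
        rw [hπ]; simp only [if_pos hi]
      rw [this, ← Finset.sum_div, Finset.sum_sub_distrib, b.2.2.2, Finset.sum_const,
        nsmul_eq_mul]
      rw [hμ]
      field_simp
      rw [← hm, mul_comm (mn _) m]
      exact div_self (ne_of_gt hpos)
    · obtain ⟨i, hi, heq⟩ := Finset.exists_mem_eq_inf' hne (b : ι → ℝ)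
      refine ⟨i, hi, ?_⟩
      rw [hπ]; simp only [if_pos hi]
      rw [hmn]; simp only
      rw [← heq]
      simp
  have hπ_bd : ∀ (b : ι → ℝ) (hb : b ∈ bdry σ), π b = b := by
    intro b hb
    have h0 : μ b = 0 := hμbd b hb
    have hmn0 : mn b = 0 := by
      have := h0
      rw [hμ] at this
      simp only at this
      rcases mul_eq_zero.mp this with h | h
      · exfalso; rw [hm] at h; norm_cast at h; omega
      · exact h
    funext i
    rw [hπ]; simp only
    split_ifs with h
    · rw [hmn0, h0]; simp
    · exact (hb.1.2.1 i h).symm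
  -- the extension
  set F : Lam σ → Z := fun b =>
    if h : μ (b : ι → ℝ) < 1 then
      (H (⟨μ (b : ι → ℝ), (hμ01 b).1, le_of_lt h⟩,
        ⟨f ⟨π (b : ι → ℝ), hπ_mem b h⟩, hf _⟩) : Z)
    else (p : Z) with hF
  have hFbd : ∀ (b : Lam σ) (hb : (b : ι → ℝ) ∈ bdry σ), F b = f ⟨b, hb⟩ := by
    intro b hb
    have h0 : μ (b : ι → ℝ) = 0 := hμbd _ hb
    have h1 : μ (b : ι → ℝ) < 1 := by rw [h0]; norm_num
    rw [hF]
    simp only [dif_pos h1]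
    have e1 : (⟨μ (b : ι → ℝ), (hμ01 b).1, le_of_lt h1⟩ : unitInterval) = 0 :=
      Subtype.ext (by simpa using h0)
    have e2 : (⟨π (b : ι → ℝ), hπ_mem b h1⟩ : bdry σ) = ⟨b, hb⟩ :=
      Subtype.ext (hπ_bd _ hb)
    rw [e1, e2, H.apply_zero]
    rfl
  have hFmem : ∀ b, F b ∈ U := by
    intro b
    rw [hF]
    dsimp only
    split_ifs with h
    · exact (H _).2
    · exact p.2
  -- continuity
  have hK : IsCompact (Set.range (fun b : bdry σ => (⟨f b, hf b⟩ : V))) := by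
    have : CompactSpace (bdry σ) := isCompact_iff_compactSpace.mp (isCompact_bdry σ)
    exact isCompact_range (Continuous.subtype_mk (map_continuous f) _)
  have hFcont : Continuous F := by
    rw [continuous_iff_continuousAt]
    intro b₀
    by_cases hb₀ : μ ((b₀ : Lam σ) : ι → ℝ) < 1
    · -- interior-regular point
      set O : Set (Lam σ) := {b : Lam σ | μ (b : ι → ℝ) < 1} with hO
      have hOopen : IsOpen O := by
        have : O = (fun b : Lam σ => μ (b : ι → ℝ)) ⁻¹' (Set.Iio 1) := rfl
        rw [this]
        exact (hμcont.comp continuous_subtype_val).isOpen_preimage _ isOpen_Iio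
      refine ContinuousOn.continuousAt ?_ (hOopen.mem_nhds hb₀)
      rw [continuousOn_iff_continuous_restrict]
      have hres : O.domRestrict F = fun b : O =>
          (H (⟨μ ((b : Lam σ) : ι → ℝ), (hμ01 b).1, le_of_lt b.2⟩,
            ⟨f ⟨π ((b : Lam σ) : ι → ℝ), hπ_mem b b.2⟩, hf _⟩) : Z) := by
        funext b
        rw [Set.restrict_apply, hF]
        dsimp only
        rw [dif_pos (show μ ((b : Lam σ) : ι → ℝ) < 1 from b.2)]
      rw [hres]
      have hc1 : Continuous fun b : O => ((b : Lam σ) : ι → ℝ) :=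
        continuous_subtype_val.comp continuous_subtype_val
      have hcμ : Continuous fun b : O => μ ((b : Lam σ) : ι → ℝ) := hμcont.comp hc1
      have hcπ : Continuous fun b : O => π ((b : Lam σ) : ι → ℝ) := by
        refine continuous_pi (fun i => ?_)
        show Continuous fun b : O => if i ∈ σ then
          ((((b : Lam σ) : ι → ℝ) i - mn ((b : Lam σ) : ι → ℝ)) /
            (1 - μ ((b : Lam σ) : ι → ℝ))) else 0
        split_ifs with h
        · refine Continuous.div ?_ ?_ ?_
          · exact ((continuous_apply i).comp hc1).sub (hmncont.comp hc1)
          · exact continuous_const.sub hcμ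
          · intro b
            have hb2 : μ ((b : Lam σ) : ι → ℝ) < 1 := b.2
            intro hcontra
            rw [sub_eq_zero] at hcontra
            exact absurd hcontra.symm (ne_of_lt hb2)
        · exact continuous_const
      refine continuous_subtype_val.comp (H.continuous.comp (Continuous.prodMk ?_ ?_))
      · exact Continuous.subtype_mk hcμ _
      · exact Continuous.subtype_mk ((map_continuous f).comp (Continuous.subtype_mk hcπ _)) _
    · -- the cone point
      have hb₀1 : μ ((b₀ : Lam σ) : ι → ℝ) = 1 := le_antisymm (hμ01 b₀).2 (not_lt.mp hb₀)
      have hFb₀ : F b₀ = (p : Z) := by rw [hF]; simp only [dif_neg hb₀]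
      rw [ContinuousAt, hFb₀, Metric.tendsto_nhds]
      intro ε hε
      -- uniform continuity of H on I × K
      have hD : IsCompact ((Set.univ : Set unitInterval) ×ˢ
          (Set.range (fun b : bdry σ => (⟨f b, hf b⟩ : V)))) :=
        isCompact_univ.prod hK
      have hUC := hD.uniformContinuousOn_of_continuous H.continuous.continuousOn
      rw [Metric.uniformContinuousOn_iff] at hUC
      obtain ⟨δ, hδ, hδ'⟩ := hUC ε hε
      have hsmem : {b : Lam σ | 1 - δ < μ (b : ι → ℝ)} ∈ nhds b₀ := by
        refine IsOpen.mem_nhds ?_ (by simp only [Set.mem_setOf_eq, hb₀1]; linarith)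
        have : {b : Lam σ | 1 - δ < μ (b : ι → ℝ)}
            = (fun b : Lam σ => μ (b : ι → ℝ)) ⁻¹' (Set.Ioi (1 - δ)) := rfl
        rw [this]
        exact ((hμcont.comp continuous_subtype_val)).isOpen_preimage _ isOpen_Ioi
      refine Filter.eventually_of_mem hsmem (fun b hb => ?_)
      simp only [Set.mem_setOf_eq] at hb
      rw [hF]
      dsimp only
      split_ifs with h
      · set t : unitInterval := ⟨μ (b : ι → ℝ), (hμ01 b).1, le_of_lt h⟩ with ht
        set v : V := ⟨f ⟨π (b : ι → ℝ), hπ_mem b h⟩, hf _⟩ with hv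
        have h1mem : ((1 : unitInterval), v) ∈ (Set.univ : Set unitInterval) ×ˢ
            (Set.range (fun b : bdry σ => (⟨f b, hf b⟩ : V))) := by
          exact ⟨trivial, ⟨_, rfl⟩⟩
        have htmem : (t, v) ∈ (Set.univ : Set unitInterval) ×ˢ
            (Set.range (fun b : bdry σ => (⟨f b, hf b⟩ : V))) := ⟨trivial, ⟨_, rfl⟩⟩
        have hdistlt : dist (t, v) ((1 : unitInterval), v) < δ := by
          rw [Prod.dist_eq]
          simp only [dist_self]
          rw [max_eq_left dist_nonneg, Subtype.dist_eq]
          simp only [Set.Icc.coe_one, ht]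
          rw [Real.dist_eq, abs_sub_lt_iff]
          constructor
          · linarith [(hμ01 b).2]
          · linarith [(hμ01 b).1]
        have := hδ' (t, v) htmem ((1 : unitInterval), v) h1mem hdistlt
        have happ1 : H ((1 : unitInterval), v) = p := H.apply_one v
        rw [happ1] at this
        calc dist ((H (t, v) : Z)) (p : Z) = dist (H (t, v)) p := (Subtype.dist_eq _ _).symm
          _ < ε := this
      · simp [hε]
  exact ⟨⟨F, hFcont⟩, hFbd, hFmem⟩

end coneExtSec

/-! ### The construction -/

variable {n : ℕ}

abbrev Idx (n : ℕ) := ℕ × (Fin n → ℤ)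

noncomputable def ctr (i : Idx n) : Fin n → ℝ := fun j => (2:ℝ)^(-(i.1:ℤ)) * i.2 j

noncomputable def rad (i : Idx n) : ℝ := (2:ℝ)^(-(i.1:ℤ))

theorem rad_pos (i : Idx n) : 0 < rad i := zpow_pos (by norm_num) _

variable (Y : Set (Fin n → ℝ))

noncomputable def dY (x : Fin n → ℝ) : ℝ := infDist x Y

def Pg (i : Idx n) : Prop := 4 * rad i ≤ dY Y (ctr i) ∧ dY Y (ctr i) ≤ 20 * rad i

noncomputable def phi (i : Idx n) (x : Fin n → ℝ) : ℝ :=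
  if Pg Y i then max 0 (rad i - dist x (ctr i)) else 0

theorem phi_continuous (i : Idx n) : Continuous (phi Y i) := by
  unfold phi
  split_ifs with h
  · exact continuous_const.max (continuous_const.sub (continuous_id.dist continuous_const))
  · exact continuous_const

theorem phi_nonneg (i : Idx n) (x : Fin n → ℝ) : 0 ≤ phi Y i x := by
  unfold phi; split_ifs <;> simp [le_max_left]

theorem phi_pos_iff {i : Idx n} {x : Fin n → ℝ} :
    0 < phi Y i x ↔ Pg Y i ∧ dist x (ctr i) < rad i := by
  unfold phi
  split_ifs with h
  · simp only [lt_max_iff, lt_self_iff_false, false_or, sub_pos, h, true_and]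
  · simp [h]

theorem dY_pos_of_phi_pos {i : Idx n} {x : Fin n → ℝ} (h : 0 < phi Y i x) :
    3 * rad i ≤ dY Y x ∧ dY Y x ≤ 21 * rad i := by
  obtain ⟨⟨hP1, hP2⟩, hd⟩ := (phi_pos_iff Y).mp h
  have h1 : dY Y (ctr i) ≤ dY Y x + dist x (ctr i) := by
    rw [dist_comm]; exact Metric.infDist_le_infDist_add_dist
  have h2 : dY Y x ≤ dY Y (ctr i) + dist x (ctr i) := Metric.infDist_le_infDist_add_dist
  constructor <;> nlinarith [rad_pos i]

/-- choice of a point of `Y` near the center of an admissible ball -/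
noncomputable def yc (hY : Y.Nonempty) (i : Idx n) : ↥Y :=
  if h : Pg Y i then
    ⟨((infDist_lt_iff hY).mp (by
        have := rad_pos i
        have h4 := h.1
        nlinarith [h.1, h.2] : dY Y (ctr i) < 2 * dY Y (ctr i))).choose,
      ((infDist_lt_iff hY).mp (by
        have := rad_pos i
        nlinarith [h.1, h.2] : dY Y (ctr i) < 2 * dY Y (ctr i))).choose_spec.1⟩
  else ⟨hY.choose, hY.choose_spec⟩

theorem yc_dist (hY : Y.Nonempty) {i : Idx n} (h : Pg Y i) :
    dist (ctr i) ((yc Y hY i : Fin n → ℝ)) ≤ 40 * rad i := by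
  rw [yc, dif_pos h]
  have := ((infDist_lt_iff hY).mp (by
      have := rad_pos i
      nlinarith [h.1, h.2] : dY Y (ctr i) < 2 * dY Y (ctr i))).choose_spec.2
  have h2 := h.2
  simp only
  nlinarith [rad_pos i]

/-- Counting lemma: indices whose doubled / tripled balls contain `x` form a small finite set. -/
theorem two_zpow_neg_natCast_le {d : ℝ} (hd : 0 < d) : ∃ k : ℕ, (2:ℝ)^(-(k:ℤ)) ≤ d := by
  obtain ⟨m, hm⟩ := exists_pow_lt_of_lt_one hd (show (1:ℝ)/2 < 1 by norm_num)
  refine ⟨m, le_of_lt ?_⟩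
  have : (2:ℝ)^(-(m:ℤ)) = ((1:ℝ)/2)^m := by
    rw [zpow_neg, zpow_natCast, one_div, inv_pow]
  rw [this]
  exact hm

theorem zpow_le_zpow_iff_right' {a b : ℤ} : (2:ℝ)^a ≤ (2:ℝ)^b ↔ a ≤ b :=
  zpow_le_zpow_iff_right₀ (by norm_num)

theorem exists_J (x : Fin n → ℝ) (hx : 0 < dY Y x) :
    ∃ J : Finset (Idx n), J.card ≤ 6 * 9^n ∧
      ∀ i : Idx n, Pg Y i → dist x (ctr i) ≤ 3 * rad i → i ∈ J := by
  set d := dY Y x with hd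
  have hfind : ∃ k : ℕ, (2:ℝ)^(-(k:ℤ)) ≤ d := two_zpow_neg_natCast_le hx
  set K := Nat.find hfind with hK
  have hKle : (2:ℝ)^(-(K:ℤ)) ≤ d := Nat.find_spec hfind
  -- the window lemma
  have hwindow : ∀ k : ℕ, ∀ a : Fin n → ℤ, Pg Y (k, a) → dist x (ctr (k, a)) ≤ 3 * rad (k, a) →
      K ≤ k ∧ k ≤ K + 5 := by
    intro k a hP hdist
    have hrad : rad ((k,a) : Idx n) = (2:ℝ)^(-(k:ℤ)) := rfl
    have h1 : dY Y (ctr ((k,a) : Idx n)) ≤ dY Y x + dist x (ctr (k,a)) := by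
      rw [dist_comm]; exact Metric.infDist_le_infDist_add_dist
    have h2 : dY Y x ≤ dY Y (ctr ((k,a) : Idx n)) + dist x (ctr (k,a)) := Metric.infDist_le_infDist_add_dist
    have hρd : (2:ℝ)^(-(k:ℤ)) ≤ d := by
      rw [hd]; rw [hrad] at hdist; nlinarith [hP.1, hP.2, rad_pos ((k,a) : Idx n)]
    have hd23 : d ≤ 23 * (2:ℝ)^(-(k:ℤ)) := by
      rw [hd]; rw [hrad] at hdist; nlinarith [hP.1, hP.2]
    constructor
    · by_contra hlt
      exact Nat.find_min hfind (by omega : k < K) hρd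
    · -- 2^{-k} ≥ d/23 ≥ 2^{-K}/23 ≥ 2^{-K}/32 = 2^{-(K+5)}
      have h32 : (2:ℝ)^(-(K:ℤ)) / 32 ≤ (2:ℝ)^(-(k:ℤ)) := by
        have : (2:ℝ)^(-(K:ℤ)) ≤ d := hKle
        linarith [hd23, this]
      have : (2:ℝ)^(-((K:ℤ)+5)) ≤ (2:ℝ)^(-(k:ℤ)) := by
        have h5 : (2:ℝ)^(-((K:ℤ)+5)) = (2:ℝ)^(-(K:ℤ)) / 32 := by
          rw [neg_add, zpow_add₀ (by norm_num : (2:ℝ) ≠ 0)]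
          norm_num
          ring
        rw [h5]; exact h32
      have := zpow_le_zpow_iff_right'.mp this
      omega
  refine ⟨(Finset.range 6).biUnion (fun j =>
    (Fintype.piFinset (fun jj : Fin n => Finset.Icc
      (⌈x jj / (2:ℝ)^(-(((K+j):ℕ):ℤ))⌉ - 4) (⌈x jj / (2:ℝ)^(-(((K+j):ℕ):ℤ))⌉ + 4))).image
      (fun a => (((K + j : ℕ), a) : Idx n))), ?_, ?_⟩
  · refine le_trans Finset.card_biUnion_le ?_
    have : ∀ j ∈ Finset.range 6,
        ((Fintype.piFinset (fun jj : Fin n => Finset.Icc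
          (⌈x jj / (2:ℝ)^(-(((K+j):ℕ):ℤ))⌉ - 4) (⌈x jj / (2:ℝ)^(-(((K+j):ℕ):ℤ))⌉ + 4))).image
          (fun a => (((K + j : ℕ), a) : Idx n))).card ≤ 9^n := by
      intro j _
      refine le_trans Finset.card_image_le ?_
      rw [Fintype.card_piFinset]
      have : ∀ jj : Fin n, (Finset.Icc
          (⌈x jj / (2:ℝ)^(-(((K+j):ℕ):ℤ))⌉ - 4) (⌈x jj / (2:ℝ)^(-(((K+j):ℕ):ℤ))⌉ + 4)).card = 9 := by
        intro jj
        rw [Int.card_Icc]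
        omega
      calc (∏ jj : Fin n, (Finset.Icc
          (⌈x jj / (2:ℝ)^(-(((K+j):ℕ):ℤ))⌉ - 4) (⌈x jj / (2:ℝ)^(-(((K+j):ℕ):ℤ))⌉ + 4)).card)
          = ∏ _jj : Fin n, 9 := Finset.prod_congr rfl (fun jj _ => this jj)
        _ = 9^n := by simp [Finset.prod_const]
        _ ≤ 9^n := le_refl _
    exact le_trans (Finset.sum_le_sum this)
      (by simp [Finset.sum_const, Finset.card_range])
  · rintro ⟨k, a⟩ hP hdist
    obtain ⟨hk1, hk2⟩ := hwindow k a hP hdist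
    rw [Finset.mem_biUnion]
    refine ⟨k - K, Finset.mem_range.mpr (by omega), ?_⟩
    rw [Finset.mem_image]
    have hkeq : K + (k - K) = k := by omega
    refine ⟨a, ?_, by rw [hkeq]⟩
    rw [Fintype.mem_piFinset]
    intro jj
    rw [hkeq, Finset.mem_Icc]
    have hco : |x jj - (2:ℝ)^(-(k:ℤ)) * a jj| ≤ 3 * (2:ℝ)^(-(k:ℤ)) := by
      have := dist_le_pi_dist x (ctr ((k,a) : Idx n)) jj
      have hr : rad ((k,a) : Idx n) = (2:ℝ)^(-(k:ℤ)) := rfl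
      rw [Real.dist_eq] at this
      calc |x jj - (2:ℝ)^(-(k:ℤ)) * a jj| ≤ dist x (ctr ((k,a) : Idx n)) := this
        _ ≤ 3 * (2:ℝ)^(-(k:ℤ)) := by rw [← hr]; exact hdist
    have hzpos : (0:ℝ) < (2:ℝ)^(-(k:ℤ)) := zpow_pos (by norm_num) _
    have hco2 : |x jj / (2:ℝ)^(-(k:ℤ)) - a jj| ≤ 3 := by
      have heq2 : x jj / (2:ℝ)^(-(k:ℤ)) - a jj
          = (x jj - (2:ℝ)^(-(k:ℤ)) * a jj) / (2:ℝ)^(-(k:ℤ)) := by field_simp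
      rw [heq2, abs_div, abs_of_pos hzpos, div_le_iff₀ hzpos]
      linarith [hco]
    rw [abs_sub_le_iff] at hco2
    constructor
    · have := Int.ceil_le_ceil (R := ℝ) (show x jj / (2:ℝ)^(-(k:ℤ)) ≤ (a jj : ℝ) + 3 by linarith)
      have h3 : ⌈((a jj : ℝ) + 3)⌉ = a jj + 3 := by
        rw [show ((a jj : ℝ) + 3) = ((a jj + 3 : ℤ) : ℝ) by push_cast; ring, Int.ceil_intCast]
      omega
    · have h4 : (a jj : ℝ) ≤ x jj / (2:ℝ)^(-(k:ℤ)) + 3 := by linarith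
      have := Int.le_ceil (x jj / (2:ℝ)^(-(k:ℤ)))
      have h5 : (a jj : ℝ) ≤ (⌈x jj / (2:ℝ)^(-(k:ℤ))⌉ : ℝ) + 3 := by linarith
      have : (a jj : ℤ) ≤ ⌈x jj / (2:ℝ)^(-(k:ℤ))⌉ + 3 := by exact_mod_cast h5
      omega

/-- Covering lemma -/
theorem exists_cover (x : Fin n → ℝ) (hx : 0 < dY Y x) (hx1 : dY Y x ≤ 1) :
    ∃ i : Idx n, 0 < phi Y i x := by
  set d := dY Y x with hd
  have hfind : ∃ k : ℕ, (2:ℝ)^(-(k:ℤ)) ≤ d / 8 := two_zpow_neg_natCast_le (by positivity)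
  set K := Nat.find hfind with hK
  have hKle : (2:ℝ)^(-(K:ℤ)) ≤ d / 8 := Nat.find_spec hfind
  have hKpos : 0 < K := by
    rcases Nat.eq_zero_or_pos K with h | h
    · exfalso
      have := hKle
      rw [h] at this
      norm_num at this
      linarith
    · exact h
  have hKlow : d / 16 < (2:ℝ)^(-(K:ℤ)) := by
    have hmin := Nat.find_min hfind (show K - 1 < K by omega)
    push_neg at hmin
    have hKm : (K - 1 : ℕ) = (K : ℤ) - 1 := by push_cast [Nat.cast_sub hKpos]; ring
    have h2 : (2:ℝ)^(-((K:ℤ) - 1)) = 2 * (2:ℝ)^(-(K:ℤ)) := by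
      rw [show -((K:ℤ) - 1) = -(K:ℤ) + 1 by ring, zpow_add₀ (by norm_num : (2:ℝ) ≠ 0)]
      ring
    have : d / 8 < 2 * (2:ℝ)^(-(K:ℤ)) := by
      rw [← h2, ← hKm]
      exact_mod_cast hmin
    linarith
  set ρ := (2:ℝ)^(-(K:ℤ)) with hρ
  have hρpos : 0 < ρ := zpow_pos (by norm_num) _
  set a : Fin n → ℤ := fun j => round (x j / ρ) with ha
  set i : Idx n := (K, a) with hi
  have hradi : rad i = ρ := rfl
  have hctr : ∀ j, ctr i j = ρ * a j := fun j => rfl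
  have hdist : dist x (ctr i) ≤ ρ / 2 := by
    rw [dist_pi_le_iff (by positivity)]
    intro j
    rw [Real.dist_eq, hctr j]
    have habs := abs_sub_round (x j / ρ)
    have heq : x j - ρ * a j = ρ * (x j / ρ - a j) := by field_simp
    rw [heq, abs_mul, abs_of_pos hρpos]
    calc ρ * |x j / ρ - (a j : ℝ)| ≤ ρ * (1/2) := by
          refine mul_le_mul_of_nonneg_left ?_ hρpos.le
          exact habs
      _ = ρ / 2 := by ring
  have h1 : dY Y (ctr i) ≤ d + ρ / 2 := by
    have h0 : dY Y (ctr i) ≤ dY Y x + dist x (ctr i) := by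
      rw [dist_comm]; exact Metric.infDist_le_infDist_add_dist
    linarith
  have h2 : d - ρ / 2 ≤ dY Y (ctr i) := by
    have : dY Y x ≤ dY Y (ctr i) + dist x (ctr i) := Metric.infDist_le_infDist_add_dist
    rw [← hd] at this
    linarith
  have hPg : Pg Y i := by
    constructor
    · rw [hradi]
      nlinarith [hKle, hKlow, h1, h2]
    · rw [hradi]
      nlinarith [hKle, hKlow, h1, h2]
  refine ⟨i, (phi_pos_iff Y).mpr ⟨hPg, ?_⟩⟩
  rw [hradi]
  linarith

/-! ### The recursively chosen extensions -/

variable (hY : Y.Nonempty)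

def CompatF (σ : Finset (Idx n)) (ih : ∀ τ, τ ⊂ σ → Option C(Lam τ, ↥Y))
    (F : C(Lam σ, ↥Y)) : Prop :=
  ∀ (τ : Finset (Idx n)) (hτ : τ ⊂ σ) (hg : (ih τ hτ).isSome) (b : Lam σ)
    (hb : (b : Idx n → ℝ) ∈ Lam τ), F b = ((ih τ hτ).get hg) ⟨b, hb⟩

def SRF (σ : Finset (Idx n)) (ih : ∀ τ, τ ⊂ σ → Option C(Lam τ, ↥Y)) : Set ℝ :=
  {r | 0 < r ∧ ∃ (F : C(Lam σ, ↥Y)) (z : Fin n → ℝ), CompatF Y σ ih F ∧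
    ∀ b, dist ((F b : Fin n → ℝ)) z ≤ r}

noncomputable def Gbody (σ : Finset (Idx n)) (ih : ∀ τ, τ ⊂ σ → Option C(Lam τ, ↥Y)) :
    Option C(Lam σ, ↥Y) :=
  if h1 : σ.card = 1 then
    some (ContinuousMap.const _ (yc Y hY (Finset.card_eq_one.mp h1).choose))
  else if h2 : 2 ≤ σ.card then
    if hex : ∃ r ∈ SRF Y σ ih,
        r < 2 * sInf (SRF Y σ ih) + σ.sup' (Finset.card_pos.mp (by omega)) rad then
      some hex.choose_spec.1.2.choose
    else none
  else none

noncomputable def G : ∀ σ : Finset (Idx n), Option C(Lam σ, ↥Y) :=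
  Finset.strongInduction (Gbody Y hY)

def good (σ : Finset (Idx n)) : Prop := (G Y hY σ).isSome

noncomputable def Gm {σ : Finset (Idx n)} (h : good Y hY σ) : C(Lam σ, ↥Y) :=
  (G Y hY σ).get h

theorem G_eq (σ : Finset (Idx n)) : G Y hY σ = Gbody Y hY σ (fun τ _ => G Y hY τ) :=
  Finset.strongInduction_eq (Gbody Y hY) σ

/-- compatibility of the chosen maps, global version -/
def Compat (σ : Finset (Idx n)) (F : C(Lam σ, ↥Y)) : Prop :=
  ∀ (τ : Finset (Idx n)) (hτ : τ ⊂ σ) (hg : good Y hY τ) (b : Lam σ)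
    (hb : (b : Idx n → ℝ) ∈ Lam τ), F b = Gm Y hY hg ⟨b, hb⟩

def SR (σ : Finset (Idx n)) : Set ℝ :=
  {r | 0 < r ∧ ∃ (F : C(Lam σ, ↥Y)) (z : Fin n → ℝ), Compat Y hY σ F ∧
    ∀ b, dist ((F b : Fin n → ℝ)) z ≤ r}

theorem SRF_eq (σ : Finset (Idx n)) : SRF Y σ (fun τ _ => G Y hY τ) = SR Y hY σ := rfl

theorem G_singleton (i : Idx n) :
    G Y hY {i} = some (ContinuousMap.const _ (yc Y hY i)) := by
  rw [G_eq, Gbody]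
  have h1 : ({i} : Finset (Idx n)).card = 1 := Finset.card_singleton i
  rw [dif_pos h1]
  have : (Finset.card_eq_one.mp h1).choose = i := by
    have h := (Finset.card_eq_one.mp h1).choose_spec
    exact (Finset.singleton_injective h.symm)
  rw [this]

theorem good_one {i : Idx n} : good Y hY {i} := by
  rw [good, G_singleton]; rfl

theorem Gm_one {i : Idx n} (h : good Y hY {i}) (b : Lam ({i} : Finset (Idx n))) :
    Gm Y hY h b = yc Y hY i := by
  have := G_singleton Y hY i
  simp only [Gm]
  simp only [this, Option.get_some]
  rfl

theorem not_good_empty : ¬ good Y hY (∅ : Finset (Idx n)) := by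
  rw [good, G_eq, Gbody]
  norm_num
  rw [dif_neg (by simp), dif_neg (by simp)]

theorem sup'_rad_pos {σ : Finset (Idx n)} (hne : σ.Nonempty) :
    0 < σ.sup' hne rad := by
  obtain ⟨i, hi⟩ := hne
  exact lt_of_lt_of_le (rad_pos i) (Finset.le_sup' rad hi)

theorem SR_nonneg {σ : Finset (Idx n)} : ∀ r ∈ SR Y hY σ, (0:ℝ) ≤ r :=
  fun _ hr => hr.1.le

theorem exists_hex {σ : Finset (Idx n)} (h2 : 2 ≤ σ.card) (hne : (SR Y hY σ).Nonempty) :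
    ∃ r ∈ SR Y hY σ,
      r < 2 * sInf (SR Y hY σ) + σ.sup' (Finset.card_pos.mp (by omega)) rad := by
  have hs : 0 < σ.sup' (Finset.card_pos.mp (by omega)) rad :=
    sup'_rad_pos (Finset.card_pos.mp (by omega))
  obtain ⟨r, hr, hrlt⟩ := Real.lt_sInf_add_pos hne hs
  refine ⟨r, hr, lt_of_lt_of_le hrlt ?_⟩
  have h0 : 0 ≤ sInf (SR Y hY σ) := Real.sInf_nonneg (SR_nonneg Y hY)
  linarith

theorem good_of_SR {σ : Finset (Idx n)} (h2 : 2 ≤ σ.card) (hne : (SR Y hY σ).Nonempty) :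
    good Y hY σ := by
  rw [good, G_eq, Gbody, dif_neg (show ¬σ.card = 1 by omega), dif_pos h2]
  have hex' : ∃ r ∈ SRF Y σ (fun τ _ => G Y hY τ),
      r < 2 * sInf (SRF Y σ (fun τ _ => G Y hY τ)) + σ.sup' (Finset.card_pos.mp (by omega)) rad :=
    exists_hex Y hY h2 hne
  rw [dif_pos hex']
  rfl

theorem Gm_spec {σ : Finset (Idx n)} (h2 : 2 ≤ σ.card) (hg : good Y hY σ) :
    ∃ (z : Fin n → ℝ) (r : ℝ), r ∈ SR Y hY σ ∧
      r < 2 * sInf (SR Y hY σ) + σ.sup' (Finset.card_pos.mp (by omega)) rad ∧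
      Compat Y hY σ (Gm Y hY hg) ∧ ∀ b, dist ((Gm Y hY hg b : Fin n → ℝ)) z ≤ r := by
  by_cases hex : ∃ r ∈ SR Y hY σ,
      r < 2 * sInf (SR Y hY σ) + σ.sup' (Finset.card_pos.mp (by omega)) rad
  · have hEq : G Y hY σ = some hex.choose_spec.1.2.choose := by
      rw [G_eq, Gbody, dif_neg (by omega), dif_pos h2]
      exact dif_pos hex
    have hGm : Gm Y hY hg = hex.choose_spec.1.2.choose := by
      simp only [Gm, hEq, Option.get_some]
    obtain ⟨hr0, hF⟩ := hex.choose_spec.1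
    obtain ⟨z, hcompat, hbound⟩ := hex.choose_spec.1.2.choose_spec
    exact ⟨z, hex.choose, ⟨hr0, hF⟩, hex.choose_spec.2, hGm ▸ hcompat, hGm ▸ hbound⟩
  · exfalso
    have : G Y hY σ = none := by
      rw [G_eq, Gbody, dif_neg (by omega), dif_pos h2]
      exact dif_neg hex
    rw [good, this] at hg
    simp at hg

/-- values of `Gm` on faces: reduction to the support -/
theorem Gm_congr {σ τ : Finset (Idx n)} (h : σ = τ) (hgσ : good Y hY σ) (hgτ : good Y hY τ)
    (b : Lam σ) (b' : Lam τ) (hb : (b : Idx n → ℝ) = (b' : Idx n → ℝ)) :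
    Gm Y hY hgσ b = Gm Y hY hgτ b' := by
  subst h
  cases Subtype.ext hb
  rfl

theorem good_card_pos {σ : Finset (Idx n)} (hg : good Y hY σ) : 0 < σ.card := by
  rcases Nat.eq_zero_or_pos σ.card with h | h
  · exact absurd hg (by rw [Finset.card_eq_zero.mp h]; exact not_good_empty Y hY)
  · exact h

theorem Gm_supp {σ : Finset (Idx n)} (hg : good Y hY σ) (b : Lam σ)
    (hs : good Y hY (suppIn σ b)) :
    Gm Y hY hg b = Gm Y hY hs ⟨b, mem_Lam_suppIn b.2⟩ := by
  rcases eq_or_ne (suppIn σ (b : Idx n → ℝ)) σ with heq | hne'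
  case inl =>
    exact Gm_congr Y hY heq.symm hg hs b _ rfl
  have hss : suppIn σ (b : Idx n → ℝ) ⊂ σ :=
    Finset.ssubset_iff_subset_ne.mpr ⟨suppIn_subset _, hne'⟩
  have h2 : 2 ≤ σ.card := by
      have hc1 := good_card_pos Y hY hg
      rcases Nat.lt_or_ge σ.card 2 with h | h
      · exfalso
        have hcc : σ.card = 1 := by omega
        obtain ⟨i, hi⟩ := Finset.card_eq_one.mp hcc
        subst hi
        have hne := suppIn_nonempty b.2
        have hsub := suppIn_subset (σ := {i}) (b : Idx n → ℝ)
        have : suppIn {i} (b : Idx n → ℝ) = {i} := by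
          obtain ⟨j, hj⟩ := hne
          have := hsub hj
          rw [Finset.mem_singleton] at this
          subst this
          exact Finset.eq_singleton_iff_nonempty_unique_mem.mpr
            ⟨⟨j, hj⟩, fun k hk => Finset.mem_singleton.mp (hsub hk)⟩
        exact hss.ne this
      · exact h
  obtain ⟨z, r, _, _, hcompat, _⟩ := Gm_spec Y hY h2 hg
  exact hcompat _ hss hs b (mem_Lam_suppIn b.2)

/-! ### glueing over the boundary -/

theorem suppIn_eq_of_subset {ι : Type*} {τ σ : Finset ι} (h : τ ⊆ σ) {b : ι → ℝ}
    (hb : b ∈ Lam τ) : suppIn σ b = suppIn τ b := by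
  ext i
  simp only [suppIn, Finset.mem_filter]
  constructor
  · rintro ⟨hiσ, hne⟩
    refine ⟨?_, hne⟩
    by_contra hiτ
    exact hne (hb.2.1 i hiτ)
  · rintro ⟨hiτ, hne⟩
    exact ⟨h hiτ, hne⟩

theorem subtype_cont_aux {α Z : Type*} [TopologicalSpace α] [TopologicalSpace Z] {K : Set α}
    (g : C(K, Z)) {b₀ : α} (hb₀ : b₀ ∈ K) {W : Set Z} (hW : W ∈ nhds (g ⟨b₀, hb₀⟩)) :
    ∃ O : Set α, IsOpen O ∧ b₀ ∈ O ∧ ∀ b (hb : b ∈ O ∩ K), g ⟨b, hb.2⟩ ∈ W := by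
  have h := ((map_continuous g).continuousAt (x := ⟨b₀, hb₀⟩)).preimage_mem_nhds hW
  rw [nhds_subtype_eq_comap, Filter.mem_comap] at h
  obtain ⟨T, hT, hTsub⟩ := h
  obtain ⟨O, hOsub, hOopen, hbO⟩ := mem_nhds_iff.mp hT
  exact ⟨O, hOopen, hbO, fun b hb => hTsub (hOsub hb.1 : ((⟨b, hb.2⟩ : K) : α) ∈ T)⟩

theorem glue {σ : Finset (Idx n)} (h2 : 2 ≤ σ.card)
    (hall : ∀ τ : Finset (Idx n), τ.Nonempty → τ ⊂ σ → good Y hY τ) :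
    ∃ gb : C(bdry σ, ↥Y), ∀ (b : bdry σ) (τ : Finset (Idx n)) (hτn : τ.Nonempty)
      (hτ : τ ⊂ σ) (hb : (b : Idx n → ℝ) ∈ Lam τ),
      gb b = Gm Y hY (hall τ hτn hτ) ⟨b, hb⟩ := by
  classical
  have hsupp : ∀ b : bdry σ, (suppIn σ (b : Idx n → ℝ)).Nonempty ∧
      suppIn σ (b : Idx n → ℝ) ⊂ σ :=
    fun b => ⟨suppIn_nonempty (bdry_subset_Lam σ b.2),
      (mem_bdry_iff_suppIn_ssubset (bdry_subset_Lam σ b.2)).mp b.2⟩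
  set g : bdry σ → ↥Y := fun b => Gm Y hY (hall _ (hsupp b).1 (hsupp b).2)
    ⟨b, mem_Lam_suppIn (bdry_subset_Lam σ b.2)⟩ with hgdef
  have hval : ∀ (b : bdry σ) (τ : Finset (Idx n)) (hτn : τ.Nonempty) (hτ : τ ⊂ σ)
      (hb : (b : Idx n → ℝ) ∈ Lam τ), g b = Gm Y hY (hall τ hτn hτ) ⟨b, hb⟩ := by
    intro b τ hτn hτ hb
    have hseq : suppIn σ (b : Idx n → ℝ) = suppIn τ (b : Idx n → ℝ) :=
      suppIn_eq_of_subset hτ.subset hb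
    have hsg : good Y hY (suppIn τ (b : Idx n → ℝ)) :=
      hseq ▸ (hall _ (hsupp b).1 (hsupp b).2)
    rw [Gm_supp Y hY (hall τ hτn hτ) ⟨b, hb⟩ hsg]
    exact Gm_congr Y hY hseq _ _ _ _ rfl
  have hcont : Continuous g := by
    rw [continuous_iff_continuousAt]
    intro b₀
    rw [ContinuousAt, Metric.tendsto_nhds]
    intro ε hε
    set S := σ.powerset with hS
    have hO : ∀ τ ∈ S, ∃ O : Set (Idx n → ℝ), IsOpen O ∧ (b₀ : Idx n → ℝ) ∈ O ∧
        (∀ (hcase : (b₀ : Idx n → ℝ) ∈ Lam τ ∧ τ.Nonempty ∧ τ ⊂ σ),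
          ∀ b (hb : b ∈ O ∩ Lam τ),
            dist ((Gm Y hY (hall τ hcase.2.1 hcase.2.2) ⟨b, hb.2⟩ : ↥Y)) (g b₀) < ε) ∧
        ((b₀ : Idx n → ℝ) ∉ Lam τ → O ∩ Lam τ = ∅) := by
      intro τ _
      by_cases hb₀τ : (b₀ : Idx n → ℝ) ∈ Lam τ
      · by_cases hrest : τ.Nonempty ∧ τ ⊂ σ
        · have hWnhds : Metric.ball (g b₀) ε ∈
              nhds (Gm Y hY (hall τ hrest.1 hrest.2) ⟨(b₀ : Idx n → ℝ), hb₀τ⟩) := by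
            rw [← hval b₀ τ hrest.1 hrest.2 hb₀τ]
            exact Metric.ball_mem_nhds _ hε
          obtain ⟨O, hOopen, hbO, hOval⟩ :=
            subtype_cont_aux (Gm Y hY (hall τ hrest.1 hrest.2)) hb₀τ hWnhds
          refine ⟨O, hOopen, hbO, fun hcase b hb => ?_, fun h => absurd hb₀τ h⟩
          have := hOval b hb
          rwa [Metric.mem_ball] at this
        · exact ⟨Set.univ, isOpen_univ, trivial,
            fun hcase => absurd ⟨hcase.2.1, hcase.2.2⟩ hrest, fun h => absurd hb₀τ h⟩
      · refine ⟨(Lam τ)ᶜ, (isClosed_Lam τ).isOpen_compl, hb₀τ,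
          fun hcase => absurd hcase.1 hb₀τ, fun _ => Set.compl_inter_self _⟩
    choose O hOopen hbO hOval hOempty using hO
    set Ostar : Set (Idx n → ℝ) := ⋂ τ : {τ // τ ∈ S}, O τ.1 τ.2 with hOstarDef
    have hOstar : IsOpen Ostar := isOpen_iInter_of_finite (fun τ => hOopen τ.1 τ.2)
    have hb₀star : (b₀ : Idx n → ℝ) ∈ Ostar :=
      Set.mem_iInter.mpr (fun τ => hbO τ.1 τ.2)
    have hmem : {b : bdry σ | (b : Idx n → ℝ) ∈ Ostar} ∈ nhds b₀ :=
      (hOstar.preimage continuous_subtype_val).mem_nhds hb₀star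
    refine Filter.eventually_of_mem hmem (fun b hb => ?_)
    have hτbS : suppIn σ (b : Idx n → ℝ) ∈ S := Finset.mem_powerset.mpr (suppIn_subset _)
    have hbLam : (b : Idx n → ℝ) ∈ Lam (suppIn σ (b : Idx n → ℝ)) :=
      mem_Lam_suppIn (bdry_subset_Lam σ b.2)
    have hbOτ : (b : Idx n → ℝ) ∈ O _ hτbS := Set.mem_iInter.mp hb ⟨_, hτbS⟩
    have hb₀Lam : (b₀ : Idx n → ℝ) ∈ Lam (suppIn σ (b : Idx n → ℝ)) := by
      by_contra h
      have hemp := hOempty _ hτbS h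
      have : (b : Idx n → ℝ) ∈ O _ hτbS ∩ Lam (suppIn σ (b : Idx n → ℝ)) := ⟨hbOτ, hbLam⟩
      rw [hemp] at this
      exact Set.notMem_empty _ this
    have key := hOval _ hτbS ⟨hb₀Lam, (hsupp b).1, (hsupp b).2⟩ (b : Idx n → ℝ) ⟨hbOτ, hbLam⟩
    rw [hval b _ (hsupp b).1 (hsupp b).2 hbLam]
    exact key
  refine ⟨⟨g, hcont⟩, hval⟩

/-! ### Lemma D : uniform extension near a point -/

theorem lemD (hYlctr : LocallyContractible Y) (y₀ : ↥Y) {ε : ℝ} (hε : 0 < ε) :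
    ∃ δ, 0 < δ ∧ δ ≤ ε ∧ ∀ (σ : Finset (Idx n)), 2 ≤ σ.card →
      ∀ f : C(bdry σ, ↥Y), (∀ b, dist ((f b : Fin n → ℝ)) (y₀ : Fin n → ℝ) < δ) →
        ∃ F : C(Lam σ, ↥Y), (∀ (b : Lam σ) (hb : (b : Idx n → ℝ) ∈ bdry σ), F b = f ⟨b, hb⟩) ∧
          ∀ b, dist ((F b : Fin n → ℝ)) (y₀ : Fin n → ℝ) < ε := by
  obtain ⟨V, hVnhds, hVsub, hc⟩ := hYlctr y₀ (Metric.ball y₀ ε) (Metric.ball_mem_nhds y₀ hε)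
  obtain ⟨δ', hδ'pos, hballsub⟩ := Metric.mem_nhds_iff.mp hVnhds
  refine ⟨min δ' ε, lt_min hδ'pos hε, min_le_right _ _, fun σ h2 f hf => ?_⟩
  have hfV : ∀ b, f b ∈ V := by
    intro b
    refine hballsub ?_
    rw [Metric.mem_ball, Subtype.dist_eq]
    exact lt_of_lt_of_le (hf b) (min_le_left _ _)
  obtain ⟨F, hFbd, hFmem⟩ := coneExt hc σ h2 f hfV
  refine ⟨F, hFbd, fun b => ?_⟩
  have hmem := hFmem b
  rw [Metric.mem_ball, Subtype.dist_eq] at hmem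
  exact hmem

/-! ### The main local goodness claim -/

theorem claimC (hYlctr : LocallyContractible Y) (y₀ : ↥Y) {ε : ℝ} (hε : 0 < ε) :
    ∃ δ, 0 < δ ∧ ∀ σ : Finset (Idx n), σ.Nonempty →
      (∀ i ∈ σ, Pg Y i ∧ dist (ctr i) (y₀ : Fin n → ℝ) ≤ δ ∧ rad i ≤ δ) →
      (∃ x, ∀ i ∈ σ, dist x (ctr i) ≤ 2 * rad i) →
      ∃ hg : good Y hY σ, ∀ b, dist ((Gm Y hY hg b : Fin n → ℝ)) (y₀ : Fin n → ℝ) ≤ ε := by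
  classical
  set N := 6 * 9^n with hN
  have hD : ∀ r : ℝ, 0 < r → ∃ δ, 0 < δ ∧ δ ≤ r ∧ (∀ (σ : Finset (Idx n)), 2 ≤ σ.card →
      ∀ f : C(bdry σ, ↥Y), (∀ b, dist ((f b : Fin n → ℝ)) (y₀ : Fin n → ℝ) < δ) →
        ∃ F : C(Lam σ, ↥Y), (∀ (b : Lam σ) (hb : (b : Idx n → ℝ) ∈ bdry σ), F b = f ⟨b, hb⟩) ∧
          ∀ b, dist ((F b : Fin n → ℝ)) (y₀ : Fin n → ℝ) < r) :=
    fun r hr => lemD Y hYlctr y₀ hr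
  set δf : ℝ → ℝ := fun r => if hr : 0 < r then (hD r hr).choose else 1 with hδf
  have hδfpos : ∀ r, 0 < r → 0 < δf r := by
    intro r hr
    rw [hδf]; simp only [dif_pos hr]; exact (hD r hr).choose_spec.1
  have hδfspec : ∀ r (hr : 0 < r), (∀ (σ : Finset (Idx n)), 2 ≤ σ.card →
      ∀ f : C(bdry σ, ↥Y), (∀ b, dist ((f b : Fin n → ℝ)) (y₀ : Fin n → ℝ) < δf r) →
        ∃ F : C(Lam σ, ↥Y), (∀ (b : Lam σ) (hb : (b : Idx n → ℝ) ∈ bdry σ), F b = f ⟨b, hb⟩) ∧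
          ∀ b, dist ((F b : Fin n → ℝ)) (y₀ : Fin n → ℝ) < r) := by
    intro r hr
    have : δf r = (hD r hr).choose := by rw [hδf]; simp only [dif_pos hr]
    rw [this]
    exact (hD r hr).choose_spec.2.2
  set E : ℕ → ℝ := fun m => Nat.rec ε (fun _ prev => (1/2) * min (prev/5) (δf (prev/5))) m
    with hE
  have hE0 : E 0 = ε := rfl
  have hEsuccEq : ∀ m, E (m+1) = (1/2) * min (E m/5) (δf (E m/5)) := fun m => rfl
  have hEpos : ∀ m, 0 < E m := by
    intro m
    induction m with
    | zero => exact hε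
    | succ m ihm =>
        rw [hEsuccEq m]
        have h5 : 0 < E m / 5 := by linarith
        exact mul_pos (by norm_num) (lt_min h5 (hδfpos _ h5))
  have hEsucc1 : ∀ m, E (m+1) ≤ E m / 10 := by
    intro m
    rw [hEsuccEq m]
    have := min_le_left (E m/5) (δf (E m/5))
    linarith
  have hEsucc2 : ∀ m, E (m+1) < δf (E m / 5) := by
    intro m
    rw [hEsuccEq m]
    have h1 := min_le_right (E m/5) (δf (E m/5))
    have h2 := hδfpos (E m/5) (by linarith [hEpos m])
    linarith
  have hEstep : ∀ j, E (j+1) ≤ E j :=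
    fun j => le_trans (hEsucc1 j) (by linarith [hEpos j])
  have hEanti : ∀ i j : ℕ, i ≤ j → E j ≤ E i := by
    intro i j hij
    induction j, hij using Nat.le_induction with
    | base => exact le_refl _
    | succ j hij ihj => exact le_trans (hEstep j) ihj
  set δ'' : ℝ := E N / 50 with hδ''
  have hδ''pos : 0 < δ'' := by
    rw [hδ'']
    linarith [hEpos N]
  have key : ∀ σ : Finset (Idx n), σ.Nonempty →
      (∀ i ∈ σ, Pg Y i ∧ dist (ctr i) (y₀ : Fin n → ℝ) ≤ δ'' ∧ rad i ≤ δ'') →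
      (∃ x, ∀ i ∈ σ, dist x (ctr i) ≤ 2 * rad i) →
      ∃ hg : good Y hY σ, ∀ b, dist ((Gm Y hY hg b : Fin n → ℝ)) (y₀ : Fin n → ℝ)
        ≤ E (N + 1 - σ.card) := by
    intro σ
    induction σ using Finset.strongInduction with
    | _ σ ih =>
      intro hσne hσhyp htouch
      obtain ⟨x, hxtouch⟩ := htouch
      have hcard : σ.card ≤ N := by
        have hdx : 0 < dY Y x := by
          obtain ⟨i₀, hi₀⟩ := hσne
          have h1 : dY Y (ctr i₀) ≤ dY Y x + dist x (ctr i₀) := by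
            rw [dist_comm]; exact Metric.infDist_le_infDist_add_dist
          have h4 := (hσhyp i₀ hi₀).1.1
          have ht := hxtouch i₀ hi₀
          nlinarith [rad_pos i₀]
        obtain ⟨J, hJcard, hJmem⟩ := exists_J Y x hdx
        have hsub : σ ⊆ J := fun i hi => hJmem i (hσhyp i hi).1
          (by nlinarith [hxtouch i hi, rad_pos i])
        calc σ.card ≤ J.card := Finset.card_le_card hsub
          _ ≤ N := hJcard
      rcases Nat.lt_or_ge σ.card 2 with hc1 | hc2
      · -- singletons
        have hcc : σ.card = 1 := by
          have := Finset.card_pos.mpr hσne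
          omega
        obtain ⟨i, rfl⟩ := Finset.card_eq_one.mp hcc
        refine ⟨good_one Y hY, fun b => ?_⟩
        rw [Gm_one Y hY _ b]
        obtain ⟨hPgi, hdisti, hradi⟩ := hσhyp i (Finset.mem_singleton_self i)
        have h40 := yc_dist Y hY hPgi
        have htri : dist ((yc Y hY i : Fin n → ℝ)) (y₀ : Fin n → ℝ)
            ≤ dist ((yc Y hY i : Fin n → ℝ)) (ctr i) + dist (ctr i) (y₀ : Fin n → ℝ) :=
          dist_triangle _ _ _
        rw [dist_comm ((yc Y hY i : Fin n → ℝ)) (ctr i)] at htri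
        have hEN : 41 * δ'' ≤ E (N + 1 - ({i} : Finset (Idx n)).card) := by
          rw [Finset.card_singleton]
          have : E (N + 1 - 1) = E N := by norm_num
          rw [this, hδ'']
          linarith [hEpos N]
        calc dist ((yc Y hY i : Fin n → ℝ)) (y₀ : Fin n → ℝ)
            ≤ 40 * rad i + δ'' := by linarith
          _ ≤ 41 * δ'' := by linarith
          _ ≤ _ := hEN
      · -- the inductive case
        set m' := N + 1 - σ.card with hm'
        have hm'1 : 1 ≤ m' := by omega
        have hm'plus : m' + 1 = N + 2 - σ.card := by omega
        have hFace : ∀ τ : Finset (Idx n), τ.Nonempty → τ ⊂ σ →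
            ∃ hg : good Y hY τ, ∀ b, dist ((Gm Y hY hg b : Fin n → ℝ)) (y₀ : Fin n → ℝ)
              ≤ E (m'+1) := by
          intro τ hτn hτ
          obtain ⟨hg, hbound⟩ := ih τ hτ hτn (fun i hi => hσhyp i (hτ.subset hi))
            ⟨x, fun i hi => hxtouch i (hτ.subset hi)⟩
          refine ⟨hg, fun b => le_trans (hbound b) (hEanti (m'+1) (N + 1 - τ.card) ?_)⟩
          have := Finset.card_lt_card hτ
          have := Finset.card_pos.mpr hτn
          omega
        have hallgood : ∀ τ : Finset (Idx n), τ.Nonempty → τ ⊂ σ → good Y hY τ :=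
          fun τ h1 h2 => (hFace τ h1 h2).choose
        obtain ⟨gb, hgb⟩ := glue Y hY hc2 hallgood
        have hgbbound : ∀ b : bdry σ, dist ((gb b : Fin n → ℝ)) (y₀ : Fin n → ℝ) ≤ E (m'+1) := by
          intro b
          have hbss := (mem_bdry_iff_suppIn_ssubset (bdry_subset_Lam σ b.2)).mp b.2
          have hbne := suppIn_nonempty (bdry_subset_Lam σ b.2)
          rw [hgb b _ hbne hbss (mem_Lam_suppIn (bdry_subset_Lam σ b.2))]
          exact (hFace _ hbne hbss).choose_spec _
        have hEm'5 : 0 < E m' / 5 := by linarith [hEpos m']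
        obtain ⟨F, hFbd, hFbound⟩ := hδfspec (E m'/5) hEm'5 σ hc2 gb
          (fun b => lt_of_le_of_lt (hgbbound b) (hEsucc2 m'))
        have hcompatF : Compat Y hY σ F := by
          intro τ hτ hgτ b hb
          have hbbd : (b : Idx n → ℝ) ∈ bdry σ := Lam_subset_bdry hτ hb
          rw [hFbd b hbbd]
          have hτne : τ.Nonempty := by
            rcases Finset.eq_empty_or_nonempty τ with rfl | h
            · exfalso
              have := hb.2.2
              simp at this
            · exact h
          rw [hgb ⟨b, hbbd⟩ τ hτne hτ hb]
        have hSRne : (SR Y hY σ).Nonempty :=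
          ⟨E m'/5, hEm'5, F, (y₀ : Fin n → ℝ), hcompatF, fun b => (hFbound b).le⟩
        have hgσ : good Y hY σ := good_of_SR Y hY hc2 hSRne
        refine ⟨hgσ, ?_⟩
        obtain ⟨z, r, hrSR, hrlt, hcompatG, hbound⟩ := Gm_spec Y hY hc2 hgσ
        have hsInf : sInf (SR Y hY σ) ≤ E m'/5 :=
          csInf_le ⟨0, fun r' hr' => hr'.1.le⟩
            (⟨hEm'5, F, (y₀ : Fin n → ℝ), hcompatF, fun b => (hFbound b).le⟩ : _ ∈ SR Y hY σ)
        have hsup : σ.sup' (Finset.card_pos.mp (by omega)) rad ≤ δ'' :=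
          Finset.sup'_le _ _ (fun i hi => (hσhyp i hi).2.2)
        have hδ''m' : δ'' ≤ E m' / 50 := by
          have := hEanti m' N (by omega)
          rw [hδ'']
          linarith
        have hrbound : r < E m' * (21/50) := by
          have := hrlt
          nlinarith [hsInf, hsup, hδ''m']
        obtain ⟨i₀, hi₀⟩ := hσne
        have hτ₀ne : (σ.erase i₀).Nonempty := by
          rw [← Finset.card_pos, Finset.card_erase_of_mem hi₀]
          omega
        have hτ₀ss : σ.erase i₀ ⊂ σ := Finset.erase_ssubset hi₀
        obtain ⟨b₀, hb₀⟩ := Lam_nonempty hτ₀ne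
        have hb₀σ : b₀ ∈ Lam σ := Lam_mono hτ₀ss.subset hb₀
        have hface0 : Gm Y hY hgσ ⟨b₀, hb₀σ⟩
            = Gm Y hY (hallgood _ hτ₀ne hτ₀ss) ⟨b₀, hb₀⟩ :=
          hcompatG _ hτ₀ss (hallgood _ hτ₀ne hτ₀ss) ⟨b₀, hb₀σ⟩ hb₀
        have hfacedist : dist ((Gm Y hY hgσ ⟨b₀, hb₀σ⟩ : Fin n → ℝ)) (y₀ : Fin n → ℝ)
            ≤ E (m'+1) := by
          rw [hface0]
          exact (hFace _ hτ₀ne hτ₀ss).choose_spec _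
        intro b
        have t1 := hbound b
        have t2 := hbound ⟨b₀, hb₀σ⟩
        have tri : dist ((Gm Y hY hgσ b : Fin n → ℝ)) (y₀ : Fin n → ℝ)
            ≤ dist ((Gm Y hY hgσ b : Fin n → ℝ)) z
              + dist z ((Gm Y hY hgσ ⟨b₀, hb₀σ⟩ : Fin n → ℝ))
              + dist ((Gm Y hY hgσ ⟨b₀, hb₀σ⟩ : Fin n → ℝ)) (y₀ : Fin n → ℝ) :=
          dist_triangle4 _ _ _ _
        rw [dist_comm z ((Gm Y hY hgσ ⟨b₀, hb₀σ⟩ : Fin n → ℝ))] at tri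
        have hE10 := hEsucc1 m'
        calc dist ((Gm Y hY hgσ b : Fin n → ℝ)) (y₀ : Fin n → ℝ)
            ≤ r + r + E (m'+1) := by linarith
          _ ≤ E m' := by linarith [hEpos m']
  refine ⟨δ'', hδ''pos, fun σ hne hhyp htouch => ?_⟩
  obtain ⟨hg, hb⟩ := key σ hne hhyp htouch
  exact ⟨hg, fun b => le_trans (hb b) (by rw [← hE0]; exact hEanti 0 _ (Nat.zero_le _))⟩

/-! ### the neighborhood and retraction -/

def Vg : Set (Fin n → ℝ) :=
  {x | (∃ i, 0 < phi Y i x) ∧ ∀ σ : Finset (Idx n), σ.Nonempty →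
    (∀ i ∈ σ, Pg Y i ∧ dist x (ctr i) ≤ 2 * rad i) → good Y hY σ}

def UU : Set (Fin n → ℝ) := Y ∪ Vg Y hY

noncomputable def suppF (x : Fin n → ℝ) : Finset (Idx n) :=
  if hx : 0 < dY Y x then (exists_J Y x hx).choose.filter (fun i => 0 < phi Y i x) else ∅

theorem mem_suppF {x : Fin n → ℝ} (hx : 0 < dY Y x) (i : Idx n) :
    i ∈ suppF Y x ↔ 0 < phi Y i x := by
  rw [suppF, dif_pos hx, Finset.mem_filter]
  constructor
  · exact fun h => h.2
  · intro h
    obtain ⟨hP, hd⟩ := (phi_pos_iff Y).mp h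
    refine ⟨(exists_J Y x hx).choose_spec.2 i hP ?_, h⟩
    have := rad_pos i
    linarith

noncomputable def Sphi (x : Fin n → ℝ) : ℝ := ∑ i ∈ suppF Y x, phi Y i x

noncomputable def bx (x : Fin n → ℝ) : Idx n → ℝ := fun i => phi Y i x / Sphi Y x

theorem Sphi_pos {x : Fin n → ℝ} (hx : 0 < dY Y x) (hne : ∃ i, 0 < phi Y i x) :
    0 < Sphi Y x := by
  obtain ⟨i, hi⟩ := hne
  have hmem : i ∈ suppF Y x := (mem_suppF Y hx i).mpr hi
  calc (0:ℝ) < phi Y i x := hi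
    _ ≤ Sphi Y x := Finset.single_le_sum (fun j _ => phi_nonneg Y j x) hmem

theorem bx_mem {x : Fin n → ℝ} (hx : 0 < dY Y x) (hne : ∃ i, 0 < phi Y i x) :
    bx Y x ∈ Lam (suppF Y x) := by
  have hS := Sphi_pos Y hx hne
  refine ⟨fun i => div_nonneg (phi_nonneg Y i x) hS.le, fun i hi => ?_, ?_⟩
  · have : ¬ 0 < phi Y i x := fun h => hi ((mem_suppF Y hx i).mpr h)
    have h0 : phi Y i x = 0 := le_antisymm (not_lt.mp this) (phi_nonneg Y i x)
    show phi Y i x / Sphi Y x = 0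
    rw [h0, zero_div]
  · show ∑ i ∈ suppF Y x, phi Y i x / Sphi Y x = 1
    rw [← Finset.sum_div]
    exact div_self hS.ne'

theorem dY_pos_of_mem_Vg {x : Fin n → ℝ} (hx : x ∈ Vg Y hY) : 0 < dY Y x := by
  obtain ⟨i, hi⟩ := hx.1
  have := (dY_pos_of_phi_pos Y hi).1
  have := rad_pos i
  linarith

theorem good_suppF {x : Fin n → ℝ} (hx : x ∈ Vg Y hY) : good Y hY (suppF Y x) := by
  have hd := dY_pos_of_mem_Vg Y hY hx
  obtain ⟨i, hi⟩ := hx.1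
  refine hx.2 _ ⟨i, (mem_suppF Y hd i).mpr hi⟩ (fun j hj => ?_)
  obtain ⟨hP, hdist⟩ := (phi_pos_iff Y).mp ((mem_suppF Y hd j).mp hj)
  exact ⟨hP, by linarith [rad_pos j]⟩

noncomputable def rmap (x : UU Y hY) : ↥Y :=
  if h : (x : Fin n → ℝ) ∈ Y then ⟨x, h⟩
  else Gm Y hY (good_suppF Y hY (x.2.resolve_left h))
    ⟨bx Y x, bx_mem Y (dY_pos_of_mem_Vg Y hY (x.2.resolve_left h))
      (x.2.resolve_left h).1⟩

theorem rmap_mem_Y (x : UU Y hY) (h : (x : Fin n → ℝ) ∈ Y) :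
    (rmap Y hY x : Fin n → ℝ) = x := by
  rw [rmap, dif_pos h]

theorem continuousAt_rmap_V {x : UU Y hY} (hx : (x : Fin n → ℝ) ∈ Vg Y hY)
    (hxY : (x : Fin n → ℝ) ∉ Y) : ContinuousAt (rmap Y hY) x := by
  classical
  set x₀ : Fin n → ℝ := (x : Fin n → ℝ) with hx₀def
  have hd₀ : 0 < dY Y x₀ := dY_pos_of_mem_Vg Y hY hx
  obtain ⟨J0, hJ0card, hJ0mem⟩ := exists_J Y x₀ hd₀
  set J : Finset (Idx n) := J0.filter (fun i => Pg Y i ∧ dist x₀ (ctr i) ≤ 2 * rad i) with hJ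
  set θ : ℝ := dY Y x₀ / 100 with hθ
  have hθpos : 0 < θ := by positivity
  -- dY is positive near x₀
  have hdz : ∀ z : Fin n → ℝ, dist z x₀ < θ → 0 < dY Y z := by
    intro z hzθ
    have h1 : dY Y x₀ ≤ dY Y z + dist x₀ z := Metric.infDist_le_infDist_add_dist
    rw [dist_comm] at h1
    rw [hθ] at hzθ
    linarith
  -- supports near x₀ are inside J
  have hA : ∀ z : Fin n → ℝ, dist z x₀ < θ → ∀ i, 0 < phi Y i z → i ∈ J := by
    intro z hzθ i hφ
    obtain ⟨hPg, hdzc⟩ := (phi_pos_iff Y).mp hφ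
    obtain ⟨h3, h21⟩ := dY_pos_of_phi_pos Y hφ
    have hzθ' : dist x₀ z < θ := by rw [dist_comm]; exact hzθ
    have h1 : dY Y x₀ ≤ dY Y z + dist x₀ z :=
      Metric.infDist_le_infDist_add_dist (s := Y) (x := x₀) (y := z)
    have hradθ : 2*θ ≤ rad i := by
      rw [hθ] at *
      nlinarith [rad_pos i]
    have hdx₀c : dist x₀ (ctr i) ≤ 2 * rad i := by
      calc dist x₀ (ctr i) ≤ dist x₀ z + dist z (ctr i) := dist_triangle _ _ _
        _ ≤ θ + rad i := by rw [dist_comm x₀ z]; linarith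
        _ ≤ 2 * rad i := by linarith
    exact Finset.mem_filter.mpr ⟨hJ0mem i hPg (by linarith), hPg, hdx₀c⟩
  have hgoodJ : ∀ τ : Finset (Idx n), τ.Nonempty → τ ⊆ J → good Y hY τ := by
    intro τ hτn hτJ
    refine hx.2 τ hτn (fun i hi => ?_)
    have := Finset.mem_filter.mp (hτJ hi)
    exact ⟨this.2.1, this.2.2⟩
  set σ₀ := suppF Y x₀ with hσ₀
  have hσ₀J : σ₀ ⊆ J := fun i hi =>
    hA x₀ (by rw [dist_self]; exact hθpos) i ((mem_suppF Y hd₀ i).mp hi)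
  have hσ₀ne : σ₀.Nonempty := by
    obtain ⟨i, hi⟩ := hx.1
    exact ⟨i, (mem_suppF Y hd₀ i).mpr hi⟩
  -- the local sum and local barycentric map
  set SL : (Fin n → ℝ) → ℝ := fun z => ∑ i ∈ J, phi Y i z with hSL
  have hSLcont : Continuous SL := continuous_finset_sum _ (fun i _ => phi_continuous Y i)
  have hSLeq : ∀ z, dist z x₀ < θ → SL z = Sphi Y z := by
    intro z h1
    have h2 := hdz z h1
    rw [hSL, Sphi]
    simp only
    symm
    refine Finset.sum_subset (fun i hi => hA z h1 i ((mem_suppF Y h2 i).mp hi)) ?_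
    intro i _ hni
    have : ¬ 0 < phi Y i z := fun hc => hni ((mem_suppF Y h2 i).mpr hc)
    linarith [phi_nonneg Y i z]
  have hSLx₀ : SL x₀ = Sphi Y x₀ := hSLeq x₀ (by rw [dist_self]; exact hθpos)
  have hSLpos : 0 < SL x₀ := by rw [hSLx₀]; exact Sphi_pos Y hd₀ hx.1
  set bL : (Fin n → ℝ) → (Idx n → ℝ) := fun z i => phi Y i z / SL z with hbL
  have hbLcont : ContinuousAt bL x₀ := by
    rw [continuousAt_pi]
    intro i
    exact ((phi_continuous Y i).continuousAt).div hSLcont.continuousAt hSLpos.ne'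
  have hbLeq : ∀ z, dist z x₀ < θ → bL z = bx Y z := by
    intro z h1
    funext i
    rw [hbL, bx]
    simp only
    rw [hSLeq z h1]
  have hbLx₀ : bL x₀ = bx Y x₀ := hbLeq x₀ (by rw [dist_self]; exact hθpos)
  -- value of Gm on big simplices at bx x₀
  have hrx : rmap Y hY x = Gm Y hY (good_suppF Y hY hx)
      ⟨bx Y x₀, bx_mem Y hd₀ hx.1⟩ := by
    rw [rmap, dif_neg hxY]
  have hbxLam : ∀ τ (hστ : σ₀ ⊆ τ), bx Y x₀ ∈ Lam τ :=
    fun τ hστ => Lam_mono hστ (bx_mem Y hd₀ hx.1)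
  have hval₀ : ∀ τ (hτJ : τ ⊆ J) (hστ : σ₀ ⊆ τ),
      Gm Y hY (hgoodJ τ (hσ₀ne.mono hστ) hτJ) ⟨bx Y x₀, hbxLam τ hστ⟩ = rmap Y hY x := by
    intro τ hτJ hστ
    have hsup : suppIn τ (bx Y x₀) = σ₀ := by
      ext i
      rw [suppIn, Finset.mem_filter]
      constructor
      · rintro ⟨hiτ, hne⟩
        have hφne : phi Y i x₀ ≠ 0 := by
          intro h0
          exact hne (show phi Y i x₀ / Sphi Y x₀ = 0 by rw [h0, zero_div])
        have hφpos : 0 < phi Y i x₀ := lt_of_le_of_ne (phi_nonneg Y i x₀) (Ne.symm hφne)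
        exact (mem_suppF Y hd₀ i).mpr hφpos
      · intro hi
        have hφpos := (mem_suppF Y hd₀ i).mp hi
        refine ⟨hστ hi, ?_⟩
        show phi Y i x₀ / Sphi Y x₀ ≠ 0
        exact div_ne_zero hφpos.ne' (by rw [← hSLx₀]; exact hSLpos.ne')
    have hsg : good Y hY (suppIn τ (bx Y x₀)) := by
      rw [hsup]
      exact good_suppF Y hY hx
    rw [Gm_supp Y hY _ ⟨bx Y x₀, hbxLam τ hστ⟩ hsg, hrx]
    exact Gm_congr Y hY hsup _ _ _ _ rfl
  -- continuity
  rw [ContinuousAt, Metric.tendsto_nhds]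
  intro ε hε
  -- choose per-τ open sets
  have hOs : ∀ τ, ∀ hτS : τ ∈ J.powerset, ∃ O : Set (Idx n → ℝ), IsOpen O ∧ bx Y x₀ ∈ O ∧
      (∀ (hcase : σ₀ ⊆ τ), ∀ b (hb : b ∈ O ∩ Lam τ),
        dist ((Gm Y hY (hgoodJ τ (hσ₀ne.mono hcase) (Finset.mem_powerset.mp hτS))
          ⟨b, hb.2⟩ : ↥Y)) (rmap Y hY x) < ε) ∧
      (¬ σ₀ ⊆ τ → O ∩ Lam τ = ∅) := by
    intro τ hτS
    by_cases hστ : σ₀ ⊆ τ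
    · have hWnhds : Metric.ball (rmap Y hY x) ε ∈
          nhds (Gm Y hY (hgoodJ τ (hσ₀ne.mono hστ) (Finset.mem_powerset.mp hτS))
            ⟨bx Y x₀, hbxLam τ hστ⟩) := by
        rw [hval₀ τ (Finset.mem_powerset.mp hτS) hστ]
        exact Metric.ball_mem_nhds _ hε
      obtain ⟨O, hOopen, hbO, hOval⟩ := subtype_cont_aux
        (Gm Y hY (hgoodJ τ (hσ₀ne.mono hστ) (Finset.mem_powerset.mp hτS)))
        (hbxLam τ hστ) hWnhds
      refine ⟨O, hOopen, hbO, fun hcase b hb => ?_, fun h => absurd hστ h⟩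
      have := hOval b hb
      rwa [Metric.mem_ball] at this
    · -- σ₀ ⊄ τ : pick i ∈ σ₀ \ τ ; on Lam τ the i-th coordinate vanishes, but bx x₀ i > 0
      obtain ⟨i, hiσ₀, hiτ⟩ := Finset.not_subset.mp hστ
      have hφpos := (mem_suppF Y hd₀ i).mp hiσ₀
      have hbxi : 0 < bx Y x₀ i := by
        show 0 < phi Y i x₀ / Sphi Y x₀
        exact div_pos hφpos (by rw [← hSLx₀]; exact hSLpos)
      refine ⟨{b : Idx n → ℝ | 0 < b i}, ?_, hbxi, fun hcase => absurd hcase hστ, fun _ => ?_⟩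
      · have : {b : Idx n → ℝ | 0 < b i} = (fun b : Idx n → ℝ => b i) ⁻¹' (Set.Ioi 0) := rfl
        rw [this]
        exact (continuous_apply i).isOpen_preimage _ isOpen_Ioi
      · ext b
        simp only [Set.mem_inter_iff, Set.mem_setOf_eq, Set.mem_empty_iff_false, iff_false,
          not_and]
        intro hbi hbLam
        exact absurd (hbLam.2.1 i hiτ) hbi.ne'
  choose O hOopen hbO hOval hOempty using hOs
  set Ostar : Set (Idx n → ℝ) := ⋂ τ : {τ // τ ∈ J.powerset}, O τ.1 τ.2 with hOstarDef
  have hOstar : IsOpen Ostar := isOpen_iInter_of_finite (fun τ => hOopen τ.1 τ.2)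
  have hbstar : bx Y x₀ ∈ Ostar := Set.mem_iInter.mpr (fun τ => hbO τ.1 τ.2)
  -- the eventually-conditions, in the ambient space
  have hEvAmb : ∀ᶠ z : Fin n → ℝ in nhds x₀,
      dist z x₀ < θ ∧ (∀ i ∈ σ₀, 0 < phi Y i z) ∧ bL z ∈ Ostar := by
    refine Filter.Eventually.and ?_ (Filter.Eventually.and ?_ ?_)
    · exact Filter.eventually_of_mem (Metric.ball_mem_nhds x₀ hθpos) (fun z hz => hz)
    · rw [Finset.eventually_all]
      intro i hi
      have hφpos := (mem_suppF Y hd₀ i).mp hi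
      have : {z : Fin n → ℝ | 0 < phi Y i z} ∈ nhds x₀ := by
        refine IsOpen.mem_nhds ?_ hφpos
        have : {z : Fin n → ℝ | 0 < phi Y i z} = (phi Y i) ⁻¹' (Set.Ioi 0) := rfl
        rw [this]
        exact (phi_continuous Y i).isOpen_preimage _ isOpen_Ioi
      exact Filter.eventually_of_mem this (fun z hz => hz)
    · have : Ostar ∈ nhds (bL x₀) := by
        rw [hbLx₀]
        exact hOstar.mem_nhds hbstar
      exact hbLcont.eventually_mem this
  -- transfer to the subtype
  have hEv : ∀ᶠ z : UU Y hY in nhds x,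
      dist (z : Fin n → ℝ) x₀ < θ ∧ (∀ i ∈ σ₀, 0 < phi Y i (z : Fin n → ℝ)) ∧
        bL (z : Fin n → ℝ) ∈ Ostar :=
    (continuous_subtype_val.tendsto x).eventually hEvAmb
  refine hEv.mono ?_
  rintro z ⟨hzθ, hzσ₀, hzO⟩
  have hdzpos : 0 < dY Y (z : Fin n → ℝ) := hdz _ hzθ
  have hzY : (z : Fin n → ℝ) ∉ Y := by
    intro hmem
    have : dY Y (z : Fin n → ℝ) = 0 := by
      rw [dY]
      exact Metric.infDist_zero_of_mem hmem
    linarith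
  have hzV : (z : Fin n → ℝ) ∈ Vg Y hY := z.2.resolve_left hzY
  set σz := suppF Y (z : Fin n → ℝ) with hσz
  have hσzJ : σz ⊆ J := fun i hi => hA _ hzθ i ((mem_suppF Y hdzpos i).mp hi)
  have hσ₀σz : σ₀ ⊆ σz := fun i hi =>
    (mem_suppF Y hdzpos i).mpr (hzσ₀ i hi)
  have hσzS : σz ∈ J.powerset := Finset.mem_powerset.mpr hσzJ
  have hbxz : bx Y (z : Fin n → ℝ) ∈ Lam σz := bx_mem Y hdzpos hzV.1
  have hbxzO : bx Y (z : Fin n → ℝ) ∈ O σz hσzS := by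
    have : bL (z : Fin n → ℝ) = bx Y (z : Fin n → ℝ) := hbLeq _ hzθ
    rw [← this]
    exact Set.mem_iInter.mp hzO ⟨σz, hσzS⟩
  have key := hOval σz hσzS hσ₀σz (bx Y (z : Fin n → ℝ)) ⟨hbxzO, hbxz⟩
  have hrz : rmap Y hY z = Gm Y hY
      (hgoodJ σz (hσ₀ne.mono hσ₀σz) (Finset.mem_powerset.mp hσzS)) ⟨bx Y _, hbxz⟩ := by
    rw [rmap, dif_neg hzY]
  rw [hrz]
  exact key

theorem continuousAt_rmap_Y (hYlctr : LocallyContractible Y) {x : UU Y hY}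
    (hx : (x : Fin n → ℝ) ∈ Y) : ContinuousAt (rmap Y hY) x := by
  rw [Metric.continuousAt_iff]
  intro ε hε
  set y₀ : ↥Y := ⟨(x : Fin n → ℝ), hx⟩ with hy₀
  obtain ⟨δc, hδcpos, hδcspec⟩ := claimC Y hY hYlctr y₀ (half_pos hε)
  set δ : ℝ := min (δc/2) (ε/2) with hδdef
  have hδpos : 0 < δ := lt_min (by linarith) (by linarith)
  refine ⟨δ, hδpos, fun {z} hz => ?_⟩
  have hrx : rmap Y hY x = y₀ := by rw [rmap, dif_pos hx]
  rw [Subtype.dist_eq] at hz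
  by_cases hzY : (z : Fin n → ℝ) ∈ Y
  · have hrz : rmap Y hY z = ⟨(z : Fin n → ℝ), hzY⟩ := by rw [rmap, dif_pos hzY]
    rw [hrx, hrz, Subtype.dist_eq]
    calc dist (z : Fin n → ℝ) ((y₀ : ↥Y) : Fin n → ℝ) = dist (z : Fin n → ℝ) (x : Fin n → ℝ) := rfl
      _ < δ := hz
      _ ≤ ε := le_trans (min_le_right _ _) (by linarith)
  · have hzV : (z : Fin n → ℝ) ∈ Vg Y hY := z.2.resolve_left hzY
    have hdz : 0 < dY Y (z : Fin n → ℝ) := dY_pos_of_mem_Vg Y hY hzV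
    have hdzx : dY Y (z : Fin n → ℝ) ≤ dist (z : Fin n → ℝ) (x : Fin n → ℝ) :=
      Metric.infDist_le_dist_of_mem hx
    have hσ : ∀ i ∈ suppF Y (z : Fin n → ℝ), Pg Y i ∧
        dist (ctr i) ((y₀ : ↥Y) : Fin n → ℝ) ≤ δc ∧ rad i ≤ δc := by
      intro i hi
      obtain ⟨hPg, hdzc⟩ := (phi_pos_iff Y).mp ((mem_suppF Y hdz i).mp hi)
      obtain ⟨h3, _⟩ := dY_pos_of_phi_pos Y ((mem_suppF Y hdz i).mp hi)
      have hradδ : rad i ≤ δ / 3 := by linarith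
      have hδδc : δ ≤ δc / 2 := min_le_left _ _
      refine ⟨hPg, ?_, by linarith⟩
      calc dist (ctr i) ((y₀ : ↥Y) : Fin n → ℝ)
          ≤ dist (ctr i) (z : Fin n → ℝ) + dist (z : Fin n → ℝ) (x : Fin n → ℝ) :=
            dist_triangle _ _ _
        _ ≤ rad i + δ := by rw [dist_comm]; linarith
        _ ≤ δc := by linarith
    have hσne : (suppF Y (z : Fin n → ℝ)).Nonempty := by
      obtain ⟨i, hi⟩ := hzV.1
      exact ⟨i, (mem_suppF Y hdz i).mpr hi⟩
    have htouch : ∃ w, ∀ i ∈ suppF Y (z : Fin n → ℝ), dist w (ctr i) ≤ 2 * rad i := by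
      refine ⟨(z : Fin n → ℝ), fun i hi => ?_⟩
      obtain ⟨_, hdzc⟩ := (phi_pos_iff Y).mp ((mem_suppF Y hdz i).mp hi)
      linarith [rad_pos i]
    obtain ⟨hg, hbound⟩ := hδcspec (suppF Y (z : Fin n → ℝ)) hσne hσ htouch
    have hrz : rmap Y hY z = Gm Y hY hg
        ⟨bx Y (z : Fin n → ℝ), bx_mem Y hdz hzV.1⟩ := by
      rw [rmap, dif_neg hzY]
    rw [hrx, hrz, Subtype.dist_eq]
    exact lt_of_le_of_lt (hbound _) (by linarith)

theorem locally_closed (hYlc : WeaklyLocallyCompactSpace Y) (y₀ : ↥Y) :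
    ∃ η, 0 < η ∧ ∀ z ∈ closure Y, dist z (y₀ : Fin n → ℝ) < η → z ∈ Y := by
  obtain ⟨K, hKcomp, hKnhds⟩ := exists_compact_mem_nhds y₀
  obtain ⟨η, hη, hball⟩ := Metric.mem_nhds_iff.mp hKnhds
  refine ⟨η/2, by positivity, fun z hz hdist => ?_⟩
  have hKim : IsClosed ((↑) '' K : Set (Fin n → ℝ)) :=
    (hKcomp.image continuous_subtype_val).isClosed
  have hsub : Y ∩ Metric.ball (y₀ : Fin n → ℝ) η ⊆ (↑) '' K := by
    rintro w ⟨hwY, hwball⟩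
    refine ⟨⟨w, hwY⟩, hball ?_, rfl⟩
    rw [Metric.mem_ball, Subtype.dist_eq]
    exact hwball
  have hz2 : z ∈ closure (Y ∩ Metric.ball (y₀ : Fin n → ℝ) η) := by
    rw [mem_closure_iff_nhds] at hz ⊢
    intro t ht
    have hb : Metric.ball (y₀ : Fin n → ℝ) η ∈ nhds z := by
      refine Metric.isOpen_ball.mem_nhds ?_
      rw [Metric.mem_ball]
      linarith
    obtain ⟨w, hw1, hw2⟩ := hz (t ∩ Metric.ball (y₀ : Fin n → ℝ) η) (Filter.inter_mem ht hb)
    exact ⟨w, hw1.1, hw2, hw1.2⟩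
  have : z ∈ (↑) '' K := (hKim.closure_subset_iff.mpr hsub) hz2
  obtain ⟨w, _, rfl⟩ := this
  exact w.2

theorem mem_interior_UU (hYlc : WeaklyLocallyCompactSpace Y)
    (hYlctr : LocallyContractible Y) (y₀ : ↥Y) :
    UU Y hY ∈ nhds (y₀ : Fin n → ℝ) := by
  obtain ⟨η, hηpos, hcl⟩ := locally_closed Y hYlc y₀
  obtain ⟨δc, hδcpos, hδcspec⟩ := claimC Y hY hYlctr y₀ one_pos
  set δ : ℝ := min (η/2) (min (δc/4) (1/2)) with hδdef
  have hδpos : 0 < δ := lt_min (by linarith) (lt_min (by linarith) (by norm_num))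
  have hδη : δ ≤ η/2 := min_le_left _ _
  have hδc4 : δ ≤ δc/4 := le_trans (min_le_right _ _) (min_le_left _ _)
  have hδhalf : δ ≤ 1/2 := le_trans (min_le_right _ _) (min_le_right _ _)
  rw [Metric.mem_nhds_iff]
  refine ⟨δ, hδpos, fun z hzball => ?_⟩
  rw [Metric.mem_ball] at hzball
  by_cases hzY : z ∈ Y
  · exact Or.inl hzY
  · have hdzpos : 0 < dY Y z := by
      rcases lt_or_eq_of_le (Metric.infDist_nonneg (s := Y) (x := z)) with h | h
      · exact h
      · exfalso
        have hzcl : z ∈ closure Y := by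
          rw [Metric.mem_closure_iff_infDist_zero ⟨(y₀ : Fin n → ℝ), y₀.2⟩]
          exact h.symm
        exact hzY (hcl z hzcl (by linarith))
    have hdz1 : dY Y z ≤ dist z ((y₀ : ↥Y) : Fin n → ℝ) := Metric.infDist_le_dist_of_mem y₀.2
    obtain ⟨i, hi⟩ := exists_cover Y z hdzpos (by linarith)
    refine Or.inr ⟨⟨i, hi⟩, fun σ hσne hσmem => ?_⟩
    have hσ : ∀ i ∈ σ, Pg Y i ∧ dist (ctr i) ((y₀ : ↥Y) : Fin n → ℝ) ≤ δc ∧ rad i ≤ δc := by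
      intro j hj
      obtain ⟨hPg, hdzc⟩ := hσmem j hj
      have h1 : dY Y (ctr j) ≤ dY Y z + dist z (ctr j) := by
        rw [dist_comm]; exact Metric.infDist_le_infDist_add_dist
      have hr2 : 2 * rad j ≤ dY Y z := by nlinarith [hPg.1]
      refine ⟨hPg, ?_, by linarith⟩
      calc dist (ctr j) ((y₀ : ↥Y) : Fin n → ℝ)
          ≤ dist (ctr j) z + dist z ((y₀ : ↥Y) : Fin n → ℝ) := dist_triangle _ _ _
        _ ≤ 2 * rad j + δ := by rw [dist_comm]; linarith
        _ ≤ δc := by linarith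
    exact (hδcspec σ hσne hσ ⟨z, fun j hj => (hσmem j hj).2⟩).choose

end ENR

/-- If `Y ⊆ ℝⁿ` is locally compact and locally contractible then `Y` is a
Euclidean neighborhood retract: there are a neighborhood `U` of `Y` in `ℝⁿ`
and a continuous retraction `r : U → Y` fixing `Y` pointwise. -/
theorem isENR_of_locallyCompact_of_locallyContractible (n : ℕ) (Y : Set (Fin n → ℝ))
    (hYlc : WeaklyLocallyCompactSpace Y) (hYlctr : LocallyContractible Y) :
    ∃ U : Set (Fin n → ℝ), U ∈ nhdsSet Y ∧ ∃ (hYU : Y ⊆ U) (r : C(U, Y)),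
      ∀ (y : Fin n → ℝ) (hy : y ∈ Y), ((r ⟨y, hYU hy⟩ : Y) : Fin n → ℝ) = y := by
  classical
  rcases Set.eq_empty_or_nonempty Y with rfl | hY
  · refine ⟨∅, by simp [nhdsSet_empty], Set.Subset.refl _,
      ⟨fun z => absurd z.2 (Set.notMem_empty _), ?_⟩, ?_⟩
    · rw [continuous_iff_continuousAt]
      intro z
      exact absurd z.2 (Set.notMem_empty _)
    · intro y hy
      exact absurd hy (Set.notMem_empty _)
  · refine ⟨ENR.UU Y hY, ?_, Set.subset_union_left, ⟨ENR.rmap Y hY, ?_⟩, ?_⟩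
    · rw [mem_nhdsSet_iff_forall]
      intro y hyY
      exact ENR.mem_interior_UU Y hY hYlc hYlctr ⟨y, hyY⟩
    · rw [continuous_iff_continuousAt]
      intro x
      by_cases hx : (x : Fin n → ℝ) ∈ Y
      · exact ENR.continuousAt_rmap_Y Y hY hYlctr hx
      · exact ENR.continuousAt_rmap_V Y hY (x.2.resolve_left hx) hx
    · intro y hy
      exact ENR.rmap_mem_Y Y hY ⟨y, Or.inl hy⟩ hy
end

section
/- Let X = {(x, y) ∈ ℝ² : x ∈ (0,1], y = sin(1/x)} ∪ {(x, y) ∈ ℝ² : x = 0, y ∈ [−1,1]} be the closed topologist's sine curve, and let f : X → ℝ be the height function f(x, y) = y. Then there exist real numbers u < v (for instance u = 0 and v = 1/2) such that the image of the homomorphism H₀(X_{f ≤ u}) → H₀(X_{f ≤ v}) induced in singular homology (with integer coefficients) by the inclusion of sublevel sets X_{f ≤ u} ↪ X_{f ≤ v} is NOT a finitely generated abelian group; i.e. the 0-th rank invariant of (X, f) is not finite. -/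
open CategoryTheory

/-- The closed topologist's sine curve:
`{(x, sin(1/x)) : x ∈ (0,1]} ∪ ({0} × [-1,1])`. -/
def closedTopologistSineCurve : Set (ℝ × ℝ) :=
  {p | p.1 ∈ Set.Ioc (0 : ℝ) 1 ∧ p.2 = Real.sin (1 / p.1)} ∪
    {p | p.1 = 0 ∧ p.2 ∈ Set.Icc (-1 : ℝ) 1}

section Aux
open CategoryTheory Limits SimplexCategory unitInterval Real

noncomputable def simplexPath {n : SimplexCategory} (a b : SimplexCategory.toTop.{0}.obj n) : Path a b :=
  (PathConnectedSpace.joined a b).somePath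

theorem joined_toTopObj {n : SimplexCategory} (a b : SimplexCategory.toTop.{0}.obj n) : Joined a b := ⟨simplexPath a b⟩

namespace SingularAux

/-- the space of singular `n`-simplices -/
noncomputable abbrev S (Y : TopCat.{0}) (n : ℕ) := (TopCat.toSSet.obj Y).obj (Opposite.op (SimplexCategory.mk n))

/-- base point of `Δ⁰` -/
noncomputable def pt0 : (SimplexCategory.toTop.{0}.obj (SimplexCategory.mk 0) : Type) :=
  default

variable (Y : TopCat.{0})

/-- class of a point in `ZerothHomotopy` -/
def cl (y : Y) : ZerothHomotopy Y := @Quotient.mk _ (pathSetoid Y) y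

/-- counting components: chain degree 0 to free abelian group on π₀ -/
noncomputable def comp0 : (singularChainComplex.obj Y).X 0 ⟶
    AddCommGrpCat.of (FreeAbelianGroup (ZerothHomotopy Y)) :=
  AddCommGrpCat.ofHom (FreeAbelianGroup.lift (fun (τ : S Y 0) => FreeAbelianGroup.of (cl Y ((show SimplexCategory.toTop.obj (SimplexCategory.mk 0) ⟶ Y from τ.down) pt0))))

lemma comp0_of (τ : S Y 0) :
    comp0 Y (FreeAbelianGroup.of τ) = FreeAbelianGroup.of (cl Y ((show SimplexCategory.toTop.obj (SimplexCategory.mk 0) ⟶ Y from τ.down) pt0)) :=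
  FreeAbelianGroup.lift_apply_of _ _

lemma d10_comp0 : (singularChainComplex.obj Y).d 1 0 ≫ comp0 Y = 0 := by
  apply AddCommGrpCat.hom_ext
  apply FreeAbelianGroup.lift_ext
  intro τ
  show comp0 Y (((singularChainComplex.obj Y).d 1 0) (FreeAbelianGroup.of τ)) = 0
  have hd : (singularChainComplex.obj Y).d 1 0 =
      AlgebraicTopology.AlternatingFaceMapComplex.objD
        (((SimplicialObject.whiskering _ _).obj AddCommGrpCat.free).obj (TopCat.toSSet.obj Y)) 0 :=
    AlgebraicTopology.alternatingFaceMapComplex_obj_d _ 0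
  rw [hd, AlgebraicTopology.AlternatingFaceMapComplex.objD]
  rw [Fin.sum_univ_two]
  simp only [Fin.val_zero, pow_zero, one_smul, Fin.val_one, pow_one, neg_smul]
  have h2 : ∀ x : (singularChainComplex.obj Y).X 1, ((((SimplicialObject.whiskering Type AddCommGrpCat).obj AddCommGrpCat.free).obj (TopCat.toSSet.obj Y)).δ (0 : Fin 2) +
          -(((SimplicialObject.whiskering Type AddCommGrpCat).obj AddCommGrpCat.free).obj (TopCat.toSSet.obj Y)).δ (1 : Fin 2)) x
      = (((SimplicialObject.whiskering Type AddCommGrpCat).obj AddCommGrpCat.free).obj (TopCat.toSSet.obj Y)).δ (0 : Fin 2) x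
        + -((((SimplicialObject.whiskering Type AddCommGrpCat).obj AddCommGrpCat.free).obj (TopCat.toSSet.obj Y)).δ (1 : Fin 2) x) := fun _ => rfl
  erw [h2]
  have hδ : ∀ i : Fin 2,
      ((((SimplicialObject.whiskering _ _).obj AddCommGrpCat.free).obj (TopCat.toSSet.obj Y)).δ i)
        (FreeAbelianGroup.of τ)
        = FreeAbelianGroup.of (ULift.up (SimplexCategory.toTop.map (SimplexCategory.δ i) ≫ τ.down)) := by
    intro i
    exact FreeAbelianGroup.map_of _ _
  erw [map_add, map_neg, hδ 0, hδ 1, comp0_of, comp0_of]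
  have : cl Y ((SimplexCategory.toTop.map (SimplexCategory.δ 0) ≫ τ.down) pt0)
      = cl Y ((SimplexCategory.toTop.map (SimplexCategory.δ 1) ≫ τ.down) pt0) := by
    apply Quotient.sound
    show Joined _ _
    have h := joined_toTopObj (SimplexCategory.toTop.map (SimplexCategory.δ 0) pt0)
      (SimplexCategory.toTop.map (SimplexCategory.δ 1) pt0)
    exact ⟨(h.somePath).map τ.down.hom.continuous⟩
  rw [this]
  simp

end SingularAux

namespace SingularAux
open HomologicalComplex

noncomputable abbrev ECX (Y : TopCat.{0}) := (singularChainComplex.obj Y).extend ComplexShape.embeddingDownNat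

lemma ef0 : ComplexShape.embeddingDownNat.f 0 = 0 := rfl
lemma ef1 : ComplexShape.embeddingDownNat.f 1 = -1 := rfl
lemma prev0 : (ComplexShape.up ℤ).prev 0 = -1 := by apply ComplexShape.prev_eq'; simp
lemma next0 : (ComplexShape.up ℤ).next 0 = 1 := by apply ComplexShape.next_eq'; simp

variable (Y : TopCat.{0})

lemma isZero_ECX_one : Limits.IsZero ((ECX Y).X 1) := by
  apply isZero_extend_X
  intro i
  simp only [ComplexShape.embeddingDownNat_f]
  omega

lemma d01_zero : (ECX Y).d 0 1 = 0 := (isZero_ECX_one Y).eq_of_tgt _ 0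

/-- the chain group at degree 0 of the extended complex, identified -/
noncomputable def ι0 : (ECX Y).X 0 ≅ (singularChainComplex.obj Y).X 0 :=
  (singularChainComplex.obj Y).extendXIso ComplexShape.embeddingDownNat ef0

noncomputable def ψ : (ECX Y).X 0 ⟶ AddCommGrpCat.of (FreeAbelianGroup (ZerothHomotopy Y)) :=
  (ι0 Y).hom ≫ comp0 Y

lemma d_ψ : (ECX Y).d (-1) 0 ≫ ψ Y = 0 := by
  rw [(singularChainComplex.obj Y).extend_d_eq ComplexShape.embeddingDownNat ef1 ef0]
  dsimp only [ψ, ι0]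
  rw [Category.assoc, Category.assoc, Iso.inv_hom_id_assoc, d10_comp0, Limits.comp_zero]

/-- the map `H₀ Y → ℤ[π₀ Y]` -/
noncomputable def hcomp : (ECX Y).homology 0 ⟶ AddCommGrpCat.of (FreeAbelianGroup (ZerothHomotopy Y)) :=
  (ECX Y).homologyι 0 ≫ (ECX Y).descOpcycles (ψ Y) (-1) prev0 (d_ψ Y)

/-- constant singular 0-simplex -/
noncomputable def σpt {Y : TopCat.{0}} (y : Y) : S Y 0 := ULift.up (TopCat.ofHom ⟨fun _ => y, continuous_const⟩)

noncomputable def elt (y : Y) : (ECX Y).X 0 := (ι0 Y).inv (FreeAbelianGroup.of (σpt y))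

/-- the class of a point in `H₀` -/
noncomputable def clsH (y : Y) : (ECX Y).homology 0 :=
  (ECX Y).homologyπ 0 ((ECX Y).liftCycles (𝟙 ((ECX Y).X 0)) 1 next0
    (by rw [Category.id_comp, d01_zero]) (elt Y y))

lemma hcomp_clsH (y : Y) : hcomp Y (clsH Y y) = FreeAbelianGroup.of (cl Y y) := by
  have h1 : (ECX Y).liftCycles (𝟙 ((ECX Y).X 0)) 1 next0
        (by rw [Category.id_comp, d01_zero]) ≫ (ECX Y).homologyπ 0 ≫ hcomp Y
      = ψ Y := by
    dsimp only [hcomp]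
    rw [← Category.assoc ((ECX Y).homologyπ 0), homology_π_ι]
    rw [← Category.assoc, ← Category.assoc]
    rw [liftCycles_i]
    rw [Category.id_comp, p_descOpcycles]
  have h2 := congrArg (fun (f : (ECX Y).X 0 ⟶ _) => f (elt Y y)) h1
  dsimp at h2
  -- LHS of h2 should be hcomp (clsH y)
  refine Eq.trans ?_ (h2.trans ?_)
  · rfl
  · dsimp only [ψ, elt]
    have : (ι0 Y).hom ((ι0 Y).inv (FreeAbelianGroup.of (σpt y))) = FreeAbelianGroup.of (σpt y) := by
      have := congrArg (fun (f : (singularChainComplex.obj Y).X 0 ⟶ _) =>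
        f (FreeAbelianGroup.of (σpt y))) (ι0 Y).inv_hom_id
      dsimp at this
      exact this
    refine Eq.trans ?_ (comp0_of Y (σpt y))
    show comp0 Y ((ι0 Y).hom ((ι0 Y).inv (FreeAbelianGroup.of (σpt y)))) = _
    rw [this]

end SingularAux

namespace SingularAux
open HomologicalComplex

lemma map_clsH {A B : TopCat.{0}} (g : A ⟶ B) (a : A) :
    homologyMap (extendMap (singularChainComplex.map g) ComplexShape.embeddingDownNat) 0
      (clsH A a) = clsH B (g a) := by
  set φ := extendMap (singularChainComplex.map g) ComplexShape.embeddingDownNat with hφ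
  -- step 1 : naturality of homologyπ
  have h1 := congrArg (fun (f : (ECX A).cycles 0 ⟶ (ECX B).homology 0) =>
      f ((ECX A).liftCycles (𝟙 ((ECX A).X 0)) 1 next0
        (by rw [Category.id_comp, d01_zero]) (elt A a)))
    (homologyπ_naturality φ 0)
  dsimp at h1
  -- h1 : π (cyclesMap φ c) = homologyMap φ (π c)  (or the other direction)
  -- key : φ.f 0 (elt A a) = elt B (g a)
  have key : φ.f 0 (elt A a) = elt B (g a) := by
    rw [hφ, extendMap_f _ ComplexShape.embeddingDownNat ef0]
    show (ι0 B).inv ((singularChainComplex.map g).f 0 ((ι0 A).hom (elt A a))) = elt B (g a)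
    have h2 : (ι0 A).hom (elt A a) = FreeAbelianGroup.of (σpt a) := by
      have := congrArg (fun (f : (singularChainComplex.obj A).X 0 ⟶ _) =>
        f (FreeAbelianGroup.of (σpt a))) (ι0 A).inv_hom_id
      dsimp at this
      exact this
    rw [h2]
    have h3 : (singularChainComplex.map g).f 0 (FreeAbelianGroup.of (σpt a))
        = FreeAbelianGroup.of (σpt (g a)) := by
      have h4 : ULift.up ((σpt a).down ≫ g) = σpt (g a) := rfl
      show FreeAbelianGroup.map _ (FreeAbelianGroup.of (σpt a)) = _
      exact (FreeAbelianGroup.map_of _ _).trans (congrArg _ h4)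
    rw [h3]
    rfl
  -- step 2 : identify cycles
  have hinj : Function.Injective ((ECX B).iCycles 0) :=
    (AddCommGrpCat.mono_iff_injective _).1 inferInstance
  have h5 : cyclesMap φ 0 ((ECX A).liftCycles (𝟙 ((ECX A).X 0)) 1 next0
        (by rw [Category.id_comp, d01_zero]) (elt A a))
      = (ECX B).liftCycles (𝟙 ((ECX B).X 0)) 1 next0
        (by rw [Category.id_comp, d01_zero]) (elt B (g a)) := by
    apply hinj
    have e1 := congrArg (fun (f : (ECX A).cycles 0 ⟶ (ECX B).X 0) =>
        f ((ECX A).liftCycles (𝟙 ((ECX A).X 0)) 1 next0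
          (by rw [Category.id_comp, d01_zero]) (elt A a)))
      (cyclesMap_i φ 0)
    dsimp at e1
    refine Eq.trans e1 ?_
    show φ.f 0 ((ECX A).iCycles 0 (((ECX A).liftCycles (𝟙 ((ECX A).X 0)) 1 next0
          (by rw [Category.id_comp, d01_zero])) (elt A a))) = _
    have e2 := congrArg (fun (f : (ECX A).X 0 ⟶ (ECX A).X 0) => φ.f 0 (f (elt A a)))
      ((ECX A).liftCycles_i (𝟙 ((ECX A).X 0)) 1 next0 (by rw [Category.id_comp, d01_zero]))
    dsimp at e2
    refine Eq.trans e2 ?_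
    rw [key]
    have e3 := congrArg (fun (f : (ECX B).X 0 ⟶ (ECX B).X 0) => f (elt B (g a)))
      ((ECX B).liftCycles_i (𝟙 ((ECX B).X 0)) 1 next0 (by rw [Category.id_comp, d01_zero]))
    dsimp at e3
    exact e3.symm
  dsimp only [clsH]
  rw [← h5]
  exact h1

end SingularAux

lemma not_fg_aux {ι : Type} (c : ℕ → ι) (hc : Function.Injective c)
    (S : AddSubgroup (FreeAbelianGroup ι)) (hmem : ∀ n, FreeAbelianGroup.of (c n) ∈ S) :
    ¬ S.FG := by
  rintro ⟨T, hT⟩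
  classical
  set F : Finset ι := T.biUnion (fun x => x.support) with hF
  have hsupp : ∀ x ∈ S, x.support ⊆ F := by
    intro x hx
    rw [← hT] at hx
    induction hx using AddSubgroup.closure_induction with
    | mem y hy =>
        intro i hi
        exact Finset.mem_biUnion.2 ⟨y, hy, hi⟩
    | zero => simp
    | add y z _ _ hy hz =>
        exact (FreeAbelianGroup.support_add y z).trans (Finset.union_subset hy hz)
    | neg y _ hy => rw [FreeAbelianGroup.support_neg]; exact hy
  have hcF : ∀ n, c n ∈ F := fun n => by
    have := hsupp _ (hmem n)
    rw [FreeAbelianGroup.support_of] at this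
    exact this (Finset.mem_singleton_self _)
  have : (Set.range c).Finite := Set.Finite.subset F.finite_toSet (by
    rintro _ ⟨n, rfl⟩; exact hcF n)
  exact (Set.infinite_range_of_injective hc) this

lemma fg_map_aux {G H : Type} [AddCommGroup G] [AddCommGroup H] (f : G →+ H)
    {S : AddSubgroup G} (h : S.FG) : (S.map f).FG := by
  obtain ⟨T, hT⟩ := h
  classical
  exact ⟨T.image f, by rw [Finset.coe_image, ← AddMonoidHom.map_closure, hT]⟩

namespace SineAux


noncomputable def dd (n : ℕ) : ℝ := π/2 + π + 2*π*n
noncomputable def bb (n : ℕ) : ℝ := π/2 + 2*π*n + 2*π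

lemma dd_pos (n : ℕ) : 0 < dd n := by
  have := pi_pos
  have : (0:ℝ) ≤ 2*π*n := by positivity
  unfold dd; nlinarith [pi_pos]

lemma one_le_dd (n : ℕ) : 1 ≤ dd n := by
  have h3 := pi_gt_three
  have : (0:ℝ) ≤ 2*π*n := by positivity
  unfold dd; nlinarith

lemma bb_pos (n : ℕ) : 0 < bb n := by
  have : (0:ℝ) ≤ 2*π*n := by positivity
  unfold bb; nlinarith [pi_pos]

lemma one_le_bb (n : ℕ) : 1 ≤ bb n := by
  have h3 := pi_gt_three
  have : (0:ℝ) ≤ 2*π*n := by positivity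
  unfold bb; nlinarith

lemma dd_lt_bb (n : ℕ) : dd n < bb n := by
  unfold dd bb; nlinarith [pi_pos]

lemma bb_lt_dd {m n : ℕ} (h : m < n) : bb m < dd n := by
  have hn : (m:ℝ) + 1 ≤ n := by exact_mod_cast h
  unfold dd bb; nlinarith [pi_pos]

lemma sin_dd (n : ℕ) : Real.sin (dd n) = -1 := by
  have : dd n = (π/2 + π) + (n:ℤ) * (2*π) := by unfold dd; push_cast; ring
  rw [this, Real.sin_add_int_mul_two_pi, Real.sin_add_pi, Real.sin_pi_div_two]

lemma sin_bb (n : ℕ) : Real.sin (bb n) = 1 := by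
  have : bb n = π/2 + ((n:ℤ)+1) * (2*π) := by unfold bb; push_cast; ring
  rw [this]
  have := Real.sin_add_int_mul_two_pi (π/2) ((n:ℤ)+1)
  push_cast at this ⊢
  rw [this, Real.sin_pi_div_two]

/-- the point `(1/dd n, -1)` of the curve -/
noncomputable def pX (n : ℕ) : closedTopologistSineCurve :=
  ⟨(1/(dd n), -1), Or.inl ⟨⟨by exact one_div_pos.mpr (dd_pos n), by
      rw [div_le_one (dd_pos n)]; exact one_le_dd n⟩, by
    show (-1:ℝ) = Real.sin (1/(1/(dd n)))
    rw [one_div_one_div, sin_dd]⟩⟩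

noncomputable def pB (n : ℕ) : {p : closedTopologistSineCurve | (p : ℝ × ℝ).2 ≤ (1/2:ℝ)} :=
  ⟨pX n, by show (-1:ℝ) ≤ 1/2; norm_num⟩

lemma not_joined {m n : ℕ} (h : m < n) : ¬ Joined (pB m) (pB n) := by
  rintro ⟨γ⟩
  set f : ℝ → ℝ := fun t =>
    ((γ (Set.projIcc 0 1 zero_le_one t) : closedTopologistSineCurve) : ℝ × ℝ).1 with hf
  have hcont : Continuous f :=
    continuous_fst.comp (continuous_subtype_val.comp (continuous_subtype_val.comp
      (γ.continuous.comp (continuous_projIcc))))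
  have e0 : Set.projIcc (0:ℝ) 1 zero_le_one 0 = (0 : unitInterval) := by
    rw [Set.projIcc_left]; exact Subtype.ext rfl
  have e1 : Set.projIcc (0:ℝ) 1 zero_le_one 1 = (1 : unitInterval) := by
    rw [Set.projIcc_right]; exact Subtype.ext rfl
  have hf0 : f 0 = 1/(dd m) := by
    show ((γ (Set.projIcc 0 1 zero_le_one 0) : closedTopologistSineCurve) : ℝ × ℝ).1 = _
    rw [e0, γ.source]; rfl
  have hf1 : f 1 = 1/(dd n) := by
    show ((γ (Set.projIcc 0 1 zero_le_one 1) : closedTopologistSineCurve) : ℝ × ℝ).1 = _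
    rw [e1, γ.target]; rfl
  have hx : 1/(bb m) ∈ Set.Icc (f 1) (f 0) := by
    rw [hf0, hf1]
    constructor
    · exact le_of_lt (one_div_lt_one_div_of_lt (bb_pos m) (bb_lt_dd h))
    · exact le_of_lt (one_div_lt_one_div_of_lt (dd_pos m) (dd_lt_bb m))
  obtain ⟨t, _, ht⟩ := intermediate_value_Icc' (zero_le_one) hcont.continuousOn hx
  set p := γ (Set.projIcc 0 1 zero_le_one t) with hp
  have hp1 : ((p : closedTopologistSineCurve) : ℝ × ℝ).1 = 1/(bb m) := ht
  have hmem := (p : closedTopologistSineCurve).2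
  rcases hmem with hL | hR
  · -- on the graph part : second coordinate is sin(bb m) = 1
    have h2 : ((p : closedTopologistSineCurve) : ℝ × ℝ).2 = 1 := by
      rw [hL.2, hp1, one_div_one_div, sin_bb]
    have h3 : ((p : closedTopologistSineCurve) : ℝ × ℝ).2 ≤ 1/2 := p.2
    rw [h2] at h3
    norm_num at h3
  · have h0 : (1:ℝ)/(bb m) = 0 := by rw [← hp1]; exact hR.1
    have := one_div_pos.2 (bb_pos m)
    linarith
end SineAux

end Aux

/-- For the closed topologist's sine curve filtered by the height function
`f(x,y) = y`, there are `u < v` such that the image of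
`H₀(X_{f ≤ u}) → H₀(X_{f ≤ v})` induced by the inclusion of sublevel sets is
not finitely generated: the 0-th rank invariant is not finite. -/
theorem closedTopologistSineCurve_rank_invariant_not_finite :
    ∃ (u v : ℝ) (huv : u < v),
      ¬ (AddMonoidHom.range ((singularHomology 0).map
        (show TopCat.of {p : closedTopologistSineCurve | (p : ℝ × ℝ).2 ≤ u} ⟶
              TopCat.of {p : closedTopologistSineCurve | (p : ℝ × ℝ).2 ≤ v} from
          (TopCat.ofHom ⟨Set.inclusion (fun p hp => le_trans hp huv.le),
           continuous_inclusion _⟩))).hom).FG := by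
  refine ⟨0, 1/2, by norm_num, ?_⟩
  intro hFG
  set A : TopCat.{0} := TopCat.of {p : closedTopologistSineCurve | (p : ℝ × ℝ).2 ≤ (0:ℝ)} with hA
  set B : TopCat.{0} := TopCat.of {p : closedTopologistSineCurve | (p : ℝ × ℝ).2 ≤ (1/2:ℝ)} with hB
  set incl : A ⟶ B :=
    TopCat.ofHom ⟨Set.inclusion (fun p hp => le_trans hp (by norm_num : (0:ℝ) ≤ 1/2)),
     continuous_inclusion _⟩ with hincl
  -- points of `A`
  set pA : ℕ → A := fun n => ⟨SineAux.pX n, by show (-1:ℝ) ≤ 0; norm_num⟩ with hpA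
  have hinclpA : ∀ n, incl (pA n) = SineAux.pB n := fun n => Subtype.ext rfl
  -- the image subgroup in the free abelian group on `π₀ B`
  set R := AddMonoidHom.range ((singularHomology 0).map incl).hom with hR
  have hRfg : R.FG := hFG
  have hTfg : (R.map (SingularAux.hcomp B).hom).FG := fg_map_aux _ hRfg
  -- injectivity of components
  have cinj : Function.Injective (fun n => SingularAux.cl B (SineAux.pB n)) := by
    intro m n hmn
    by_contra hne
    have hj : Joined (SineAux.pB m) (SineAux.pB n) := Quotient.exact hmn
    rcases lt_or_gt_of_ne hne with h | h
    · exact SineAux.not_joined h hj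
    · exact SineAux.not_joined h hj.symm
  -- membership of the generators
  have hmem : ∀ n, FreeAbelianGroup.of (SingularAux.cl B (SineAux.pB n)) ∈
      R.map (SingularAux.hcomp B).hom := by
    intro n
    refine ⟨(singularHomology 0).map incl (SingularAux.clsH A (pA n)),
      ⟨SingularAux.clsH A (pA n), rfl⟩, ?_⟩
    have h1 : (singularHomology 0).map incl (SingularAux.clsH A (pA n))
        = SingularAux.clsH B (incl (pA n)) := SingularAux.map_clsH incl (pA n)
    rw [h1, hinclpA n]
    exact SingularAux.hcomp_clsH B (SineAux.pB n)
  exact not_fg_aux _ cinj _ hmem hTfg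
end

section
/- Let X = {(x, y) ∈ ℝ² : x ∈ (0,1], y = sin(1/x)} be the (open-ended) topologist's sine curve without the limit segment, and let f : X → ℝ be the height function f(x, y) = y. Then there exist real numbers u < v (for instance u = 0 and v = 1/2) such that the image of the homomorphism H₀(X_{f ≤ u}) → H₀(X_{f ≤ v}) induced in singular homology (with integer coefficients) by the inclusion of sublevel sets X_{f ≤ u} ↪ X_{f ≤ v} is NOT a finitely generated abelian group; i.e. the 0-th rank invariant of (X, f) is not finite. -/
open CategoryTheory

/-- The topologist's sine curve without the limit segment:
`{(x, sin(1/x)) : x ∈ (0,1]}`. -/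
def topologistSineCurve : Set (ℝ × ℝ) :=
  {p | p.1 ∈ Set.Ioc (0 : ℝ) 1 ∧ p.2 = Real.sin (1 / p.1)}

namespace SineAux

open Real Simplicial

/-! ### Topological auxiliary results -/

/-- The sublevel set of the height function at level `w`. -/
abbrev Ylev (w : ℝ) : Set topologistSineCurve :=
  setOf (fun p : topologistSineCurve => (p : ℝ × ℝ).2 ≤ w)

noncomputable abbrev Yt (w : ℝ) : TopCat.{0} := TopCat.of (Ylev w)

/-- The rescaled reciprocal coordinate. -/
noncomputable def val {w : ℝ} (q : Ylev w) : ℝ :=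
  (1 / ((q : topologistSineCurve) : ℝ × ℝ).1 - π / 2) / (2 * π)

lemma continuous_val {w : ℝ} : Continuous (val (w := w)) := by
  have hx : Continuous fun q : Ylev w => ((q : topologistSineCurve) : ℝ × ℝ).1 :=
    (continuous_fst.comp continuous_subtype_val).comp continuous_subtype_val
  have hne : ∀ q : Ylev w, ((q : topologistSineCurve) : ℝ × ℝ).1 ≠ 0 :=
    fun q => ne_of_gt q.1.2.1.1
  exact ((continuous_const.div hx hne).sub continuous_const).div_const _

lemma val_ne_int {w : ℝ} (hw : w < 1) (q : Ylev w) (m : ℤ) : val q ≠ m := by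
  intro h
  have hπ : (2 * π) ≠ 0 := by positivity
  have hx : ((q : topologistSineCurve) : ℝ × ℝ).1 ≠ 0 := ne_of_gt q.1.2.1.1
  have h1 : 1 / ((q : topologistSineCurve) : ℝ × ℝ).1 = π / 2 + m * (2 * π) := by
    rw [val, div_eq_iff hπ] at h; linarith
  have hsin : sin (1 / ((q : topologistSineCurve) : ℝ × ℝ).1) = 1 := by
    rw [h1, Real.sin_add_int_mul_two_pi, Real.sin_pi_div_two]
  have hy : ((q : topologistSineCurve) : ℝ × ℝ).2
      = sin (1 / ((q : topologistSineCurve) : ℝ × ℝ).1) := q.1.2.2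
  have hq : ((q : topologistSineCurve) : ℝ × ℝ).2 ≤ w := q.2
  rw [hy, hsin] at hq
  linarith

/-- The index of the branch of the sine curve containing a point. -/
noncomputable def idx {w : ℝ} (q : Ylev w) : ℤ := ⌊val q⌋

lemma floor_path {g : unitInterval → ℝ} (hg : Continuous g)
    (h : ∀ t, ∀ m : ℤ, g t ≠ m) : ⌊g 0⌋ = ⌊g 1⌋ := by
  by_contra hne
  rcases lt_or_gt_of_ne hne with hlt | hlt
  · have h1 : g 0 < (⌊g 1⌋ : ℝ) := by
      have : (⌊g 0⌋ : ℝ) + 1 ≤ (⌊g 1⌋ : ℝ) := by exact_mod_cast hlt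
      linarith [Int.lt_floor_add_one (g 0)]
    have h2 : (⌊g 1⌋ : ℝ) ≤ g 1 := Int.floor_le _
    obtain ⟨t, ht⟩ := intermediate_value_univ (0 : unitInterval) 1 hg ⟨le_of_lt h1, h2⟩
    exact h t _ ht
  · have h1 : g 1 < (⌊g 0⌋ : ℝ) := by
      have : (⌊g 1⌋ : ℝ) + 1 ≤ (⌊g 0⌋ : ℝ) := by exact_mod_cast hlt
      linarith [Int.lt_floor_add_one (g 1)]
    have h2 : (⌊g 0⌋ : ℝ) ≤ g 0 := Int.floor_le _
    obtain ⟨t, ht⟩ := intermediate_value_univ (1 : unitInterval) 0 hg ⟨le_of_lt h1, h2⟩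
    exact h t _ ht

lemma idx_path {w : ℝ} (hw : w < 1) (g : unitInterval → Ylev w) (hg : Continuous g) :
    idx (g 0) = idx (g 1) :=
  floor_path (continuous_val.comp hg) (fun t m => val_ne_int hw (g t) m)

/-! ### Segments in the topological simplex -/

noncomputable def seg {n : SimplexCategory} (a b : stdSimplex ℝ (Fin (n.len + 1))) (t : unitInterval) :
    stdSimplex ℝ (Fin (n.len + 1)) :=
  ⟨fun i => (1 - (t : ℝ)) * a.1 i + (t : ℝ) * b.1 i, by
    have ht0 := t.2.1
    have ht1 := t.2.2
    refine ⟨fun i => add_nonneg (mul_nonneg (by linarith) (a.2.1 i)) (mul_nonneg ht0 (b.2.1 i)), ?_⟩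
    rw [Finset.sum_add_distrib, ← Finset.mul_sum, ← Finset.mul_sum]
    rw [a.2.2, b.2.2]
    ring⟩

lemma continuous_seg {n : SimplexCategory} (a b : stdSimplex ℝ (Fin (n.len + 1))) :
    Continuous (seg a b) := by
  apply Continuous.subtype_mk
  apply continuous_pi
  intro i
  exact (((continuous_const.sub continuous_subtype_val)).mul continuous_const).add
    (continuous_subtype_val.mul continuous_const)

lemma seg_zero {n : SimplexCategory} (a b : stdSimplex ℝ (Fin (n.len + 1))) : seg a b 0 = a := by
  apply Subtype.ext
  funext i
  simp [seg]

lemma seg_one {n : SimplexCategory} (a b : stdSimplex ℝ (Fin (n.len + 1))) : seg a b 1 = b := by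
  apply Subtype.ext
  funext i
  simp [seg]

/-- The `idx` of the images of any two points of the topological `1`-simplex agree. -/
lemma idx_two_points {w : ℝ} (hw : w < 1)
    (γ : SimplexCategory.toTop.obj (SimplexCategory.mk 1) ⟶ Yt w)
    (a b : SimplexCategory.toTop.obj (SimplexCategory.mk 1)) :
    idx (γ a) = idx (γ b) := by
  have := idx_path hw (fun t => γ (ULift.up (seg (n := SimplexCategory.mk 1) a.down b.down t)))
    (γ.hom.continuous.comp (continuous_uliftUp.comp (continuous_seg a.down b.down)))
  exact (congrArg (fun z => idx (γ ⟨z⟩)) (seg_zero a.down b.down)).symm.trans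
    (this.trans (congrArg (fun z => idx (γ ⟨z⟩)) (seg_one a.down b.down)))

/-! ### Simplices -/

noncomputable def ev0 {Y : TopCat.{0}} (τ : (TopCat.toSSet.obj Y) _⦋0⦌) :
    (SimplexCategory.toTop.obj (SimplexCategory.mk 0) ⟶ Y) := τ.down

noncomputable def ev1 {Y : TopCat.{0}} (τ : (TopCat.toSSet.obj Y) _⦋1⦌) :
    (SimplexCategory.toTop.obj (SimplexCategory.mk 1) ⟶ Y) := τ.down

/-- The unique point of the topological `0`-simplex. -/
noncomputable def pt0 : SimplexCategory.toTop.{0}.obj (SimplexCategory.mk 0) :=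
  default

/-! ### The chain-level homomorphism -/

noncomputable abbrev KC (w : ℝ) : ChainComplex AddCommGrpCat.{0} ℕ :=
  singularChainComplex.obj (Yt w)

noncomputable abbrev EC (w : ℝ) : HomologicalComplex AddCommGrpCat.{0} (ComplexShape.up ℤ) :=
  (KC w).extend ComplexShape.embeddingDownNat

/-- The chain-level homomorphism sending a singular `0`-simplex to the generator
indexed by the branch of the sine curve containing its image point. -/
noncomputable def psi0 (w : ℝ) : (KC w).X 0 ⟶ AddCommGrpCat.of (ℤ →₀ ℤ) :=
  AddCommGrpCat.ofHom (FreeAbelianGroup.lift (fun τ => Finsupp.single (idx (ev0 τ pt0)) (1 : ℤ)))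

lemma psi0_of (w : ℝ) (τ : (TopCat.toSSet.obj (Yt w)) _⦋0⦌) :
    psi0 w (FreeAbelianGroup.of τ) = Finsupp.single (idx (ev0 τ pt0)) (1 : ℤ) :=
  FreeAbelianGroup.lift_apply_of _ _

lemma d_comp_psi0 {w : ℝ} (hw : w < 1) : (KC w).d 1 0 ≫ psi0 w = 0 := by
  set X' := ((SimplicialObject.whiskering _ _).obj AddCommGrpCat.free).obj
    (TopCat.toSSet.obj (Yt w)) with hX'
  have hd : (KC w).d 1 0 = AlgebraicTopology.AlternatingFaceMapComplex.objD X' 0 :=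
    AlgebraicTopology.alternatingFaceMapComplex_obj_d _ 0
  have hd2 : (KC w).d 1 0 = (X'.δ 0 - X'.δ 1 : (KC w).X 1 ⟶ (KC w).X 0) := by
    rw [hd]
    show (∑ i : Fin 2, ((-1 : ℤ) ^ (i : ℕ)) • X'.δ i) = _
    rw [Fin.sum_univ_two]
    simp
    exact (sub_eq_add_neg _ _).symm
  refine (congrArg (fun f => f ≫ psi0 w) hd2).trans ?_
  refine (Preadditive.sub_comp _ _ _).trans (sub_eq_zero.mpr ?_)
  refine AddCommGrpCat.hom_ext (FreeAbelianGroup.lift_ext _ _ (fun σ => ?_))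
  show psi0 w ((X'.δ 0) (FreeAbelianGroup.of σ)) = psi0 w ((X'.δ 1) (FreeAbelianGroup.of σ))
  have e0 : (X'.δ 0) (FreeAbelianGroup.of σ)
      = FreeAbelianGroup.of ((TopCat.toSSet.obj (Yt w)).δ 0 σ) :=
    FreeAbelianGroup.map_of_apply σ
  have e1 : (X'.δ 1) (FreeAbelianGroup.of σ)
      = FreeAbelianGroup.of ((TopCat.toSSet.obj (Yt w)).δ 1 σ) :=
    FreeAbelianGroup.map_of_apply σ
  rw [e0, e1, psi0_of, psi0_of]
  exact congrArg (fun k => Finsupp.single k (1 : ℤ))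
    (idx_two_points hw (ev1 σ)
      (SimplexCategory.toTop.map (SimplexCategory.δ 0) pt0)
      (SimplexCategory.toTop.map (SimplexCategory.δ 1) pt0))

/-! ### A subgroup of `ℤ →₀ ℤ` containing all basis vectors is not f.g. -/

lemma not_fg (T : AddSubgroup (ℤ →₀ ℤ))
    (h : ∀ n : ℕ, Finsupp.single (n : ℤ) (1 : ℤ) ∈ T) : ¬ T.FG := by
  rintro ⟨S, hS⟩
  set B : ℕ := S.sup fun g => g.support.sup Int.toNat with hB
  set N : ℤ := (B : ℤ) + 1 with hN
  have hSN : ∀ g ∈ S, g N = 0 := by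
    intro g hg
    by_contra h0
    have hmem : N ∈ g.support := Finsupp.mem_support_iff.mpr h0
    have h1 : N.toNat ≤ g.support.sup Int.toNat := Finset.le_sup (f := Int.toNat) hmem
    have h2 : g.support.sup Int.toNat ≤ B :=
      Finset.le_sup (f := fun g => g.support.sup Int.toNat) hg
    omega
  have hker : T ≤ AddMonoidHom.ker (Finsupp.applyAddHom (M := ℤ) N) := by
    rw [← hS, AddSubgroup.closure_le]
    intro g hg
    exact hSN g hg
  have hmem := hker (h N.toNat)
  rw [AddMonoidHom.mem_ker] at hmem
  have hNn : ((N.toNat : ℤ)) = N := Int.toNat_of_nonneg (by omega)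
  rw [hNn] at hmem
  simp [Finsupp.single_eq_same] at hmem

/-! ### Homological plumbing -/

lemma ef0 : (ComplexShape.embeddingDownNat).f 0 = -(0 : ℤ) := by simp

lemma ef1 : (ComplexShape.embeddingDownNat).f 1 = -(0 : ℤ) - 1 := by simp

noncomputable def isoX0 (w : ℝ) : (EC w).X (-(0 : ℤ)) ≅ (KC w).X 0 :=
  (KC w).extendXIso ComplexShape.embeddingDownNat ef0

noncomputable def Psi (w : ℝ) : (EC w).X (-(0 : ℤ)) ⟶ AddCommGrpCat.of (ℤ →₀ ℤ) :=
  (isoX0 w).hom ≫ psi0 w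

lemma d_comp_Psi {w : ℝ} (hw : w < 1) :
    (EC w).d (-(0 : ℤ) - 1) (-(0 : ℤ)) ≫ Psi w = 0 := by
  rw [Psi, (KC w).extend_d_eq ComplexShape.embeddingDownNat ef1 ef0]
  simp only [isoX0, Category.assoc, Iso.inv_hom_id_assoc]
  rw [d_comp_psi0 hw, Limits.comp_zero]

lemma isZero_X1 (w : ℝ) : Limits.IsZero ((EC w).X (-(0 : ℤ) + 1)) :=
  (KC w).isZero_extend_X _ _ (fun i => by simp; omega)

lemma d_from_zero (w : ℝ) : (EC w).d (-(0 : ℤ)) (-(0 : ℤ) + 1) = 0 :=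
  (isZero_X1 w).eq_of_tgt _ _

noncomputable def cyc (w : ℝ) (x : (EC w).X (-(0 : ℤ))) :
    AddCommGrpCat.of ℤ ⟶ (EC w).cycles (-(0 : ℤ)) :=
  (EC w).liftCycles (AddCommGrpCat.ofHom ((zmultiplesHom ((EC w).X (-(0 : ℤ)))) x)) (-(0 : ℤ) + 1) (CochainComplex.next ℤ _)
    (by rw [d_from_zero]; exact Limits.comp_zero)

lemma cyc_i {w : ℝ} (x : (EC w).X (-(0 : ℤ))) :
    (EC w).iCycles (-(0 : ℤ)) ((cyc w x) (1 : ℤ)) = x := by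
  have h : cyc w x ≫ (EC w).iCycles (-(0 : ℤ)) = AddCommGrpCat.ofHom ((zmultiplesHom ((EC w).X (-(0 : ℤ)))) x) := by
    rw [cyc]; exact (EC w).liftCycles_i _ _ _ _
  have h2 := ConcreteCategory.congr_hom h (1 : ℤ)
  exact h2.trans (one_zsmul x)

/-- The homology class of a `0`-cycle. -/
noncomputable def cls (w : ℝ) (x : (EC w).X (-(0 : ℤ))) : (EC w).homology (-(0 : ℤ)) :=
  (EC w).homologyπ (-(0 : ℤ)) ((cyc w x) (1 : ℤ))

/-- The homomorphism from `H₀` induced by `psi0`. -/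
noncomputable def psiH {w : ℝ} (hw : w < 1) :
    (EC w).homology (-(0 : ℤ)) ⟶ AddCommGrpCat.of (ℤ →₀ ℤ) :=
  (EC w).homologyι (-(0 : ℤ)) ≫
    (EC w).descOpcycles (Psi w) (-(0 : ℤ) - 1) (CochainComplex.prev ℤ _) (d_comp_Psi hw)

lemma pi_psiH {w : ℝ} (hw : w < 1) :
    (EC w).homologyπ (-(0 : ℤ)) ≫ psiH hw = (EC w).iCycles (-(0 : ℤ)) ≫ Psi w := by
  rw [psiH, ← Category.assoc, HomologicalComplex.homology_π_ι, Category.assoc,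
    HomologicalComplex.p_descOpcycles]

lemma psiH_cls {w : ℝ} (hw : w < 1) (x : (EC w).X (-(0 : ℤ))) :
    psiH hw (cls w x) = Psi w x := by
  have h1 := ConcreteCategory.congr_hom (pi_psiH hw) ((cyc w x) (1 : ℤ))
  exact h1.trans (congrArg (Psi w) (cyc_i x))


/-! ### Naturality -/

noncomputable def incl {w w' : ℝ} (h : w ≤ w') : Yt w ⟶ Yt w' :=
  TopCat.ofHom ⟨Set.inclusion (fun p hp => le_trans hp h), continuous_inclusion _⟩

noncomputable def phi {w w' : ℝ} (h : w ≤ w') : EC w ⟶ EC w' :=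
  HomologicalComplex.extendMap (singularChainComplex.map (incl h))
    ComplexShape.embeddingDownNat

lemma psiH_map {w w' : ℝ} (h : w ≤ w') (hw' : w' < 1) (x : (EC w).X (-(0 : ℤ))) :
    psiH hw' (HomologicalComplex.homologyMap (phi h) (-(0 : ℤ)) (cls w x))
      = Psi w' ((phi h).f (-(0 : ℤ)) x) := by
  have hc : (EC w).homologyπ (-(0 : ℤ)) ≫
        HomologicalComplex.homologyMap (phi h) (-(0 : ℤ)) ≫ psiH hw'
      = (EC w).iCycles (-(0 : ℤ)) ≫ (phi h).f (-(0 : ℤ)) ≫ Psi w' := by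
    rw [← Category.assoc, HomologicalComplex.homologyπ_naturality, Category.assoc,
      pi_psiH hw', ← Category.assoc, HomologicalComplex.cyclesMap_i, Category.assoc]
  have h1 := ConcreteCategory.congr_hom hc ((cyc w x) (1 : ℤ))
  exact h1.trans (congrArg (fun y => Psi w' ((phi h).f (-(0 : ℤ)) y)) (cyc_i x))

/-- The cycle in the extended complex given by a singular `0`-simplex. -/
noncomputable def xg (w : ℝ) (τ : (TopCat.toSSet.obj (Yt w)) _⦋0⦌) : (EC w).X (-(0 : ℤ)) :=
  (isoX0 w).inv (FreeAbelianGroup.of τ)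

lemma Psi_phi {w w' : ℝ} (h : w ≤ w') (τ : (TopCat.toSSet.obj (Yt w)) _⦋0⦌) :
    Psi w' ((phi h).f (-(0 : ℤ)) (xg w τ))
      = Finsupp.single (idx ((incl h) (ev0 τ pt0))) (1 : ℤ) := by
  have hc : (isoX0 w).inv ≫ (phi h).f (-(0 : ℤ)) ≫ Psi w'
      = (singularChainComplex.map (incl h)).f 0 ≫ psi0 w' := by
    rw [phi, HomologicalComplex.extendMap_f _ _ ef0, Psi]
    simp [isoX0]
  have h1 := ConcreteCategory.congr_hom hc (FreeAbelianGroup.of τ)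
  refine h1.trans ?_
  have h2 : ((singularChainComplex.map (incl h)).f 0) (FreeAbelianGroup.of τ)
      = FreeAbelianGroup.of ((TopCat.toSSet.map (incl h)).app (Opposite.op (SimplexCategory.mk 0)) τ) :=
    FreeAbelianGroup.map_of_apply τ
  refine (congrArg (psi0 w') h2).trans ?_
  exact psi0_of w' _

/-! ### The points -/

noncomputable def pn (n : ℕ) : Ylev 0 := by
  refine ⟨⟨((3 * π / 2 + 2 * π * n)⁻¹, -1), ?_, ?_⟩, ?_⟩
  · constructor
    · have := pi_gt_three
      have hn : (0:ℝ) ≤ 2 * π * n := by positivity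
      positivity
    · have := pi_gt_three
      have hn : (0:ℝ) ≤ 2 * π * n := by positivity
      have h1 : (1:ℝ) ≤ 3 * π / 2 + 2 * π * n := by linarith
      have h2 : (0:ℝ) < 3 * π / 2 + 2 * π * n := by linarith
      rw [inv_le_one_iff₀]
      right; exact h1
  · show (-1 : ℝ) = sin (1 / (3 * π / 2 + 2 * π * n)⁻¹)
    rw [one_div, inv_inv]
    have h3 : (3 * π / 2 + 2 * π * n : ℝ) = 3 * π / 2 + n * (2 * π) := by ring
    rw [h3, Real.sin_add_nat_mul_two_pi]
    have h4 : (3 * π / 2 : ℝ) = π / 2 + π := by ring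
    rw [h4, Real.sin_add_pi, Real.sin_pi_div_two]
  · show (-1 : ℝ) ≤ 0
    norm_num

lemma idx_pn (h : (0:ℝ) ≤ 1/2) (n : ℕ) : idx ((incl h) (pn n)) = n := by
  have hπ : (0:ℝ) < π := pi_pos
  have hval : val ((incl h) (pn n)) = 1 / 2 + n := by
    show (1 / ((3 * π / 2 + 2 * π * n)⁻¹ : ℝ) - π / 2) / (2 * π) = 1 / 2 + n
    rw [one_div, inv_inv]
    field_simp
    ring
  rw [idx, hval]
  rw [Int.floor_eq_iff]
  constructor
  · push_cast; linarith
  · push_cast; linarith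

/-! ### The singular 0-simplices -/

noncomputable def sn (n : ℕ) : (TopCat.toSSet.obj (Yt 0)) _⦋0⦌ :=
  ULift.up (TopCat.ofHom ⟨fun _ => pn n, continuous_const⟩ :
    SimplexCategory.toTop.obj (SimplexCategory.mk 0) ⟶ Yt 0)

lemma fg_map {G H : Type*} [AddGroup G] [AddGroup H] {P : AddSubgroup G} (h : P.FG)
    (f : G →+ H) : (P.map f).FG := by
  classical
  obtain ⟨S, hS⟩ := h
  exact ⟨S.image f, by rw [Finset.coe_image, ← AddMonoidHom.map_closure, hS]⟩


end SineAux

/-- For the (open-ended) topologist's sine curve filtered by the height function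
`f(x,y) = y`, there are `u < v` such that the image of
`H₀(X_{f ≤ u}) → H₀(X_{f ≤ v})` induced by the inclusion of sublevel sets is
not finitely generated: the 0-th rank invariant is not finite. -/
theorem topologistSineCurve_rank_invariant_not_finite :
    ∃ (u v : ℝ) (huv : u < v),
      ¬ (AddMonoidHom.range ((singularHomology 0).map
        (show TopCat.of {p : topologistSineCurve | (p : ℝ × ℝ).2 ≤ u} ⟶
              TopCat.of {p : topologistSineCurve | (p : ℝ × ℝ).2 ≤ v} from
          TopCat.ofHom ⟨Set.inclusion (fun p hp => le_trans hp huv.le),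
           continuous_inclusion _⟩)).hom).FG := by
  refine ⟨0, 1/2, by norm_num, ?_⟩
  intro hFG
  have hv : (1/2 : ℝ) < 1 := by norm_num
  have h01 : (0:ℝ) ≤ 1/2 := by norm_num
  refine SineAux.not_fg
    ((AddMonoidHom.range
      (HomologicalComplex.homologyMap (SineAux.phi h01) (-(0 : ℤ))).hom).map (SineAux.psiH hv).hom)
    (fun n => ?_) (SineAux.fg_map hFG (SineAux.psiH hv).hom)
  refine AddSubgroup.mem_map.mpr
    ⟨HomologicalComplex.homologyMap (SineAux.phi h01) (-(0 : ℤ))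
        (SineAux.cls 0 (SineAux.xg 0 (SineAux.sn n))),
      ⟨SineAux.cls 0 (SineAux.xg 0 (SineAux.sn n)), rfl⟩, ?_⟩
  exact (SineAux.psiH_map h01 hv _).trans ((SineAux.Psi_phi h01 _).trans
    (congrArg (fun k => Finsupp.single k (1:ℤ)) (SineAux.idx_pn h01 n)))
end
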